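/- arXiv:1410.0445 — 7 statements merged into one kernel-verified Lean document; each statement's English description precedes it below -/
import Mathlib

section
/- Let m ≥ 2 and let μ be a proper (2m−1)-edge-coloring of the complete graph K_{2m} such that every two distinct colors induce a C4-factor. Then 2m = 2^n for some integer n ≥ 2 (i.e., 2m is a power of 2). -/
/-- `φ` is a proper edge-coloring of the complete graph on `V` (given as a function on
unordered pairs of vertices): two edges sharing a vertex receive distinct colors. -/
def IsProperEdgeColoring {V C : Type*} (φ : Sym2 V → C) : Prop :=
  ∀ u v w : V, u ≠ v → u ≠ w → v ≠ w → φ s(u, v) ≠ φ s(u, w)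

/-- The spanning subgraph of the complete graph on `V` consisting of the edges
colored `a` or `b`. -/
def colorPairGraph {V C : Type*} (φ : Sym2 V → C) (a b : C) : SimpleGraph V where
  Adj u v := u ≠ v ∧ (φ s(u, v) = a ∨ φ s(u, v) = b)
  symm := by
    constructor
    intro u v h
    exact ⟨h.1.symm, by rw [Sym2.eq_swap]; exact h.2⟩
  loopless := ⟨fun v h => h.1 rfl⟩

/-- A graph is a `C4`-factor (of the complete graph on its vertex type) if it is
2-regular and every connected component is a 4-cycle (equivalently, for a 2-regular
graph, every connected component has exactly 4 vertices). -/
def IsC4Factor {V : Type*} (G : SimpleGraph V) : Prop :=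
  (∀ v : V, (G.neighborSet v).ncard = 2) ∧
  ∀ c : G.ConnectedComponent, c.supp.ncard = 4

/-- The set of colors appearing on edges of the clique induced by the vertex set `S`. -/
def cliqueColors {V C : Type*} (φ : Sym2 V → C) (S : Set V) : Set C :=
  {c | ∃ u ∈ S, ∃ v ∈ S, u ≠ v ∧ φ s(u, v) = c}

lemma exu {m : ℕ} (μ : Sym2 (Fin (2 * m)) → Fin (2 * m - 1))
    (hproper : IsProperEdgeColoring μ) (a : Fin (2 * m - 1)) (v : Fin (2 * m)) :
    ∃! u, u ≠ v ∧ μ s(v, u) = a := by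
  set e : {u : Fin (2 * m) // u ≠ v} → Fin (2 * m - 1) := fun u => μ s(v, u.1) with he
  have hinj : Function.Injective e := by
    rintro ⟨u, hu⟩ ⟨w, hw⟩ h
    simp only [he] at h
    by_contra hne
    simp only [Subtype.mk.injEq] at hne
    exact hproper v u w (Ne.symm hu) (Ne.symm hw) hne h
  have hcard : Fintype.card {u : Fin (2 * m) // u ≠ v} = Fintype.card (Fin (2 * m - 1)) := by
    simp [Fintype.card_subtype_compl, Fintype.card_subtype_eq]
  have hbij : Function.Bijective e :=
    (Fintype.bijective_iff_injective_and_card e).mpr ⟨hinj, hcard⟩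
  obtain ⟨⟨u, hu⟩, heu⟩ := hbij.surjective a
  refine ⟨u, ⟨hu, heu⟩, ?_⟩
  rintro w ⟨hw, hwc⟩
  have := hinj (a₁ := ⟨w, hw⟩) (a₂ := ⟨u, hu⟩) (by simp only [he, hwc]; exact heu.symm)
  exact congrArg Subtype.val this

/-- **Lemma 2(a).** If `μ` is a proper `(2m-1)`-edge-coloring of `K_{2m}`, `m ≥ 2`,
such that any two distinct colors induce a `C4`-factor, then `2m = 2ⁿ` for some `n ≥ 2`. -/
theorem order_pow_two_of_all_pairs_C4Factor (m : ℕ) (hm : 2 ≤ m)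
    (μ : Sym2 (Fin (2 * m)) → Fin (2 * m - 1))
    (hproper : IsProperEdgeColoring μ)
    (hC4 : ∀ a b : Fin (2 * m - 1), a ≠ b → IsC4Factor (colorPairGraph μ a b)) :
    ∃ n : ℕ, 2 ≤ n ∧ 2 * m = 2 ^ n := by
  classical
  -- the matching functions
  choose f hf huniq using fun (a : Fin (2 * m - 1)) (v : Fin (2 * m)) => exu μ hproper a v
  have hne : ∀ a v, f a v ≠ v := fun a v => (hf a v).1
  have hcol : ∀ a v, μ s(v, f a v) = a := fun a v => (hf a v).2
  have huniq' : ∀ a v u, u ≠ v → μ s(v, u) = a → u = f a v :=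
    fun a v u h1 h2 => huniq a v u ⟨h1, h2⟩
  -- involutivity
  have hinv : ∀ a, Function.Involutive (f a) := by
    intro a v
    refine (huniq' a (f a v) v (hne a v).symm ?_).symm
    rw [Sym2.eq_swap]; exact hcol a v
  -- distinct colors at one vertex give distinct partners
  have hdist : ∀ (a b : Fin (2 * m - 1)), a ≠ b → ∀ v, f a v ≠ f b v := by
    intro a b hab v h
    apply hab
    rw [← hcol a v, h, hcol b v]
  -- the key commutation from the C4 condition
  have hcomm0 : ∀ (a b : Fin (2 * m - 1)) (v : Fin (2 * m)), f a (f b v) = f b (f a v) := by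
    intro a b v
    rcases eq_or_ne a b with rfl | hab
    · rfl
    have hG := (hC4 a b hab).2
    set G := colorPairGraph μ a b with hGdef
    have adj_a : ∀ w, G.Adj w (f a w) := fun w => (⟨(hne a w).symm, Or.inl (hcol a w)⟩ : w ≠ f a w ∧ (μ s(w, f a w) = a ∨ μ s(w, f a w) = b))
    have adj_b : ∀ w, G.Adj w (f b w) := fun w => (⟨(hne b w).symm, Or.inr (hcol b w)⟩ : w ≠ f b w ∧ (μ s(w, f b w) = a ∨ μ s(w, f b w) = b))
    set c := G.connectedComponentMk v with hc
    have hmem : ∀ w, G.Reachable w v → w ∈ c.supp := by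
      intro w hw
      rw [SimpleGraph.ConnectedComponent.mem_supp_iff, hc]
      exact SimpleGraph.ConnectedComponent.sound hw
    have m1 : v ∈ c.supp := hmem v (SimpleGraph.Reachable.refl v)
    have m2 : f a v ∈ c.supp := hmem _ (adj_a v).symm.reachable
    have m3 : f b v ∈ c.supp := hmem _ (adj_b v).symm.reachable
    have m4 : f b (f a v) ∈ c.supp :=
      hmem _ ((adj_b (f a v)).symm.reachable.trans (adj_a v).symm.reachable)
    have m5 : f a (f b v) ∈ c.supp :=
      hmem _ ((adj_a (f b v)).symm.reachable.trans (adj_b v).symm.reachable)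
    -- distinctness
    have d12 : v ≠ f a v := (hne a v).symm
    have d13 : v ≠ f b v := (hne b v).symm
    have d23 : f a v ≠ f b v := hdist a b hab v
    have d14 : v ≠ f b (f a v) := by
      intro h
      have := congrArg (f b) h
      rw [hinv b] at this
      exact d23 this.symm
    have d24 : f a v ≠ f b (f a v) := (hne b (f a v)).symm
    have d34 : f b v ≠ f b (f a v) := by
      intro h
      have := (hinv b).injective h
      exact (hne a v) this.symm
    -- the component is exactly these four vertices
    set T : Set (Fin (2 * m)) := {v, f a v, f b v, f b (f a v)} with hT
    have hTsub : T ⊆ c.supp := by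
      intro x hx
      rcases hx with rfl | rfl | rfl | rfl
      exacts [m1, m2, m3, m4]
    have hTcard : T.ncard = 4 := by
      rw [hT]
      rw [Set.ncard_insert_of_notMem (by simp [d12, d13, d14]),
        Set.ncard_insert_of_notMem (by simp [d23, d24]),
        Set.ncard_insert_of_notMem (by simp [d34]),
        Set.ncard_singleton]
    have hTeq : T = c.supp :=
      Set.eq_of_subset_of_ncard_le hTsub (by rw [hG c, hTcard]) (Set.toFinite _)
    rw [← hTeq] at m5
    rcases m5 with h | h | h | h
    · exact absurd (congrArg (f a) h) (by rw [hinv a]; exact fun hh => d23 hh.symm)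
    · exact absurd ((hinv a).injective h) (hne b v)
    · exact absurd h (hne a (f b v))
    · exact h
  -- the involutions as permutations
  set σ : Fin (2 * m - 1) → Equiv.Perm (Fin (2 * m)) := fun a => (hinv a).toPerm with hσ
  have hσ_apply : ∀ a v, σ a v = f a v := fun a v => rfl
  set G := Subgroup.closure (Set.range σ) with hGdef
  have hσ_mem : ∀ a, σ a ∈ G := fun a => Subgroup.subset_closure ⟨a, rfl⟩
  have hσ_sq : ∀ a, σ a * σ a = 1 := by
    intro a
    ext v
    simp [hσ_apply, hinv a v]
  have hgen_comm : ∀ x ∈ Set.range σ, ∀ y ∈ Set.range σ, Commute x y := by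
    rintro x ⟨a, rfl⟩ y ⟨b, rfl⟩
    refine Equiv.ext fun v => ?_
    simp only [Equiv.Perm.mul_apply, hσ_apply]
    exact hcomm0 a b v
  have hcomm1 : ∀ x ∈ Set.range σ, ∀ g ∈ G, Commute x g := by
    intro x hx g hg
    induction hg using Subgroup.closure_induction with
    | mem y hy => exact hgen_comm x hx y hy
    | one => exact Commute.one_right x
    | mul y z hy hz h1 h2 => exact h1.mul_right h2
    | inv y hy h => exact h.inv_right
  have hcomm2 : ∀ g ∈ G, ∀ h ∈ G, Commute g h := by
    intro g hg
    induction hg using Subgroup.closure_induction with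
    | mem y hy => exact fun h hh => hcomm1 y hy h hh
    | one => exact fun h _ => Commute.one_left h
    | mul y z hy hz h1 h2 => exact fun h hh => (h1 h hh).mul_left (h2 h hh)
    | inv y hy h1 => exact fun h hh => (h1 h hh).inv_left
  have hsq : ∀ g ∈ G, g * g = 1 := by
    intro g hg
    induction hg using Subgroup.closure_induction with
    | mem y hy => obtain ⟨a, rfl⟩ := hy; exact hσ_sq a
    | one => simp
    | mul y z hy hz h1 h2 =>
        have hc : Commute y z := hcomm2 y hy z hz
        calc y * z * (y * z) = y * y * (z * z) := by
              rw [mul_assoc, ← mul_assoc z y z, ← hc.eq, mul_assoc, ← mul_assoc]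
          _ = 1 := by rw [h1, h2, mul_one]
    | inv y hy h => rw [← mul_inv_rev, h, inv_one]
  -- the base vertex
  have h0 : 0 < 2 * m := by omega
  set v₀ : Fin (2 * m) := ⟨0, h0⟩ with hv₀
  -- transitivity
  have htrans : ∀ u : Fin (2 * m), ∃ g ∈ G, g v₀ = u := by
    intro u
    rcases eq_or_ne u v₀ with rfl | hu
    · exact ⟨1, one_mem G, rfl⟩
    · refine ⟨σ (μ s(v₀, u)), hσ_mem _, ?_⟩
      rw [hσ_apply]
      exact (huniq' (μ s(v₀, u)) v₀ u hu rfl).symm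
  -- freeness
  have hfree : ∀ g ∈ G, g v₀ = v₀ → g = 1 := by
    intro g hg hgv
    refine Equiv.ext fun v => ?_
    obtain ⟨h, hh, hhv⟩ := htrans v
    have : (g * h) v₀ = (h * g) v₀ := by rw [hcomm2 g hg h hh]
    simp only [Equiv.Perm.mul_apply, hhv, hgv] at this
    simpa [hhv] using this
  -- the orbit map is a bijection
  have hbij : Function.Bijective (fun g : G => (g : Equiv.Perm (Fin (2 * m))) v₀) := by
    constructor
    · rintro ⟨g, hg⟩ ⟨h, hh⟩ hgh
      simp only at hgh
      have hmem : h⁻¹ * g ∈ G := mul_mem (inv_mem hh) hg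
      have : (h⁻¹ * g) v₀ = v₀ := by
        simp only [Equiv.Perm.mul_apply, hgh]
        exact Equiv.symm_apply_apply h v₀
      have := hfree _ hmem this
      have : g = h := by
        have := congrArg (h * ·) this
        simpa [mul_assoc] using this
      simp [this]
    · intro u
      obtain ⟨g, hg, hgv⟩ := htrans u
      exact ⟨⟨g, hg⟩, hgv⟩
  have hcard : Nat.card G = 2 * m := by
    rw [Nat.card_eq_of_bijective _ hbij]
    simp
  have hp : IsPGroup 2 G := by
    intro g
    refine ⟨1, ?_⟩
    rw [pow_one, pow_two]
    exact Subtype.ext (hsq g.1 g.2)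
  have : Fact (Nat.Prime 2) := ⟨Nat.prime_two⟩
  obtain ⟨n, hn⟩ := IsPGroup.iff_card.mp hp
  refine ⟨n, ?_, by omega⟩
  by_contra hlt
  interval_cases n <;> omega
end

section
/- Let m ≥ 2 and let μ be a proper (2m−1)-edge-coloring of the complete graph K_{2m} such that every two distinct colors induce a C4-factor, and write 2m = 2^n. Then for every k with 1 ≤ k ≤ n−1, K_{2m} contains a set of 2^k vertices such that the set of colors appearing on edges of the clique induced by these vertices has exactly 2^k − 1 elements (i.e., the restriction of μ to this clique is a proper (2^k − 1)-edge-coloring of K_{2^k}). -/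
theorem core_invol {V C : Type*} (μ : Sym2 V → C) (M : C → V → V)
    (h1 : ∀ c v, μ s(M c v, v) = c) (h2 : ∀ c v, M c v ≠ v)
    (h3 : ∀ c v u, u ≠ v → μ s(u, v) = c → u = M c v) :
    ∀ c v, M c (M c v) = v := by
  intro c v
  exact (h3 c (M c v) v (Ne.symm (h2 c v)) (by rw [Sym2.eq_swap]; exact h1 c v)).symm


theorem core_prod {V C : Type*} (μ : Sym2 V → C) (M : C → V → V)
    (h1 : ∀ c v, μ s(M c v, v) = c) (h2 : ∀ c v, M c v ≠ v)
    (h3 : ∀ c v u, u ≠ v → μ s(u, v) = c → u = M c v)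
    (hcomm : ∀ a b : C, a ≠ b → ∀ v, M a (M b v) = M b (M a v))
    (a d : C) (had : a ≠ d) (x : V) :
    ∀ y, M (μ s(M d (M a x), x)) y = M d (M a y) := by
  have hinv : ∀ c v, M c (M c v) = v := core_invol μ M h1 h2 h3
  have hDAx : M d (M a x) ≠ x := by
    intro h
    have h4 : M a x = M d x := by rw [← hinv d (M a x), h]
    exact had (by rw [← h1 a x, h4, h1 d x])
  have hbx : M (μ s(M d (M a x), x)) x = M d (M a x) := (h3 _ x _ hDAx rfl).symm
  obtain ⟨b, hbdef⟩ : ∃ b, b = μ s(M d (M a x), x) := ⟨_, rfl⟩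
  rw [← hbdef] at hbx ⊢
  have hba : b ≠ a := by
    intro h; rw [h] at hbx
    exact h2 d (M a x) hbx.symm
  have hbd : b ≠ d := by
    intro h; rw [h] at hbx
    have h5 := congrArg (M d) hbx
    rw [hinv, hinv] at h5
    exact h2 a x h5.symm
  intro y
  rcases eq_or_ne y x with rfl | hyx
  · exact hbx
  · obtain ⟨e, rfl⟩ : ∃ e, y = M e x := ⟨_, h3 _ x y hyx rfl⟩
    rcases eq_or_ne e a with rfl | hea
    · rw [hinv, hcomm b e hba, hbx, hcomm e d had, hinv]
    rcases eq_or_ne e d with rfl | hed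
    · rw [hcomm b e hbd, hbx, hinv, hcomm a e had, hinv]
    rcases eq_or_ne e b with rfl | heb
    · rw [hinv, hbx, hcomm a d had, hinv, hinv]
    · rw [hcomm b e (Ne.symm heb), hbx, hcomm a e (Ne.symm hea), hcomm d e (Ne.symm hed)]

theorem core_colors {V C : Type*} [DecidableEq V] [DecidableEq C]
    (μ : Sym2 V → C) (M : C → V → V)
    (hproper : IsProperEdgeColoring μ)
    (h1 : ∀ c v, μ s(M c v, v) = c) (h2 : ∀ c v, M c v ≠ v)
    (h3 : ∀ c v u, u ≠ v → μ s(u, v) = c → u = M c v)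
    (hcomm : ∀ a b : C, a ≠ b → ∀ v, M a (M b v) = M b (M a v))
    (x0 : V) (S : Finset V) (hx0 : x0 ∈ S)
    (hcl : ∀ v ∈ S, v ≠ x0 → ∀ u ∈ S, M (μ s(x0, v)) u ∈ S) :
    cliqueColors μ ↑S = ↑((S.erase x0).image fun v => μ s(x0, v)) := by
  have hinv : ∀ c v, M c (M c v) = v := by
    intro c v
    exact (h3 c (M c v) v (Ne.symm (h2 c v)) (by rw [Sym2.eq_swap]; exact h1 c v)).symm
  ext c
  simp only [cliqueColors, Set.mem_setOf_eq, Finset.coe_image, Set.mem_image,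
    Finset.mem_coe, Finset.mem_erase]
  constructor
  · rintro ⟨u, hu, v, hv, huv, rfl⟩
    rcases eq_or_ne u x0 with rfl | hu0
    · exact ⟨v, ⟨huv.symm, hv⟩, rfl⟩
    rcases eq_or_ne v x0 with rfl | hv0
    · exact ⟨u, ⟨hu0, hu⟩, by rw [Sym2.eq_swap]⟩
    · have hau : u = M (μ s(x0, u)) x0 := h3 _ x0 u hu0 (by rw [Sym2.eq_swap])
      have hca : μ s(u, v) ≠ μ s(x0, u) := by
        have h5 := hproper u v x0 huv hu0 hv0
        rwa [show (s(u, x0) : Sym2 V) = s(x0, u) from Sym2.eq_swap] at h5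
      have hMv : v = M (μ s(u, v)) u :=
        h3 _ u v huv.symm (by rw [Sym2.eq_swap])
      have hMav : M (μ s(x0, u)) v ∈ S := hcl u hu hu0 v hv
      refine ⟨M (μ s(x0, u)) v, ⟨?_, hMav⟩, ?_⟩
      · intro h
        have h6 := congrArg (M (μ s(x0, u))) h
        rw [hinv] at h6
        exact huv (hau.trans h6.symm)
      · have hMcv := congrArg (M (μ s(u, v))) hMv
        rw [hinv] at hMcv
        have hax := congrArg (M (μ s(x0, u))) hau
        rw [hinv] at hax
        have key : M (μ s(u, v)) (M (μ s(x0, u)) v) = x0 := by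
          rw [hcomm _ _ hca v, hMcv, hax]
        calc μ s(x0, M (μ s(x0, u)) v)
            = μ s(M (μ s(u, v)) (M (μ s(x0, u)) v), M (μ s(x0, u)) v) := by rw [key]
          _ = μ s(u, v) := h1 _ _
  · rintro ⟨v, ⟨hv0, hvS⟩, rfl⟩
    exact ⟨x0, hx0, v, hvS, Ne.symm hv0, rfl⟩

theorem core_colors_card {V C : Type*} [DecidableEq V] [DecidableEq C]
    (μ : Sym2 V → C) (M : C → V → V)
    (hproper : IsProperEdgeColoring μ)
    (h1 : ∀ c v, μ s(M c v, v) = c) (h2 : ∀ c v, M c v ≠ v)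
    (h3 : ∀ c v u, u ≠ v → μ s(u, v) = c → u = M c v)
    (hcomm : ∀ a b : C, a ≠ b → ∀ v, M a (M b v) = M b (M a v))
    (x0 : V) (S : Finset V) (hx0 : x0 ∈ S)
    (hcl : ∀ v ∈ S, v ≠ x0 → ∀ u ∈ S, M (μ s(x0, v)) u ∈ S) :
    (cliqueColors μ ↑S).ncard = S.card - 1 := by
  rw [core_colors μ M hproper h1 h2 h3 hcomm x0 S hx0 hcl, Set.ncard_coe_finset,
    Finset.card_image_of_injOn, Finset.card_erase_of_mem hx0]
  intro v hv w hw h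
  simp only [Finset.coe_erase, Set.mem_diff, Finset.mem_coe, Set.mem_singleton_iff] at hv hw
  by_contra hne
  exact hproper x0 v w (Ne.symm hv.2) (Ne.symm hw.2) hne h

theorem core_step {V C : Type*} [DecidableEq V] [DecidableEq C]
    (μ : Sym2 V → C) (M : C → V → V)
    (hproper : IsProperEdgeColoring μ)
    (h1 : ∀ c v, μ s(M c v, v) = c) (h2 : ∀ c v, M c v ≠ v)
    (h3 : ∀ c v u, u ≠ v → μ s(u, v) = c → u = M c v)
    (hcomm : ∀ a b : C, a ≠ b → ∀ v, M a (M b v) = M b (M a v))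
    (x0 : V) (S : Finset V) (hx0 : x0 ∈ S)
    (hcl : ∀ v ∈ S, v ≠ x0 → ∀ u ∈ S, M (μ s(x0, v)) u ∈ S)
    (w : V) (hw : w ∉ S) :
    ∃ T : Finset V, x0 ∈ T ∧ T.card = 2 * S.card ∧
      ∀ v ∈ T, v ≠ x0 → ∀ u ∈ T, M (μ s(x0, v)) u ∈ T := by
  have hinv : ∀ c v, M c (M c v) = v := by
    intro c v
    exact (h3 c (M c v) v (Ne.symm (h2 c v)) (by rw [Sym2.eq_swap]; exact h1 c v)).symm
  have hwx0 : w ≠ x0 := fun h => hw (h ▸ hx0)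
  have hwa : w = M (μ s(x0, w)) x0 := h3 _ x0 w hwx0 (by rw [Sym2.eq_swap])
  obtain ⟨a, ha⟩ : ∃ a, a = μ s(x0, w) := ⟨_, rfl⟩
  rw [← ha] at hwa
  have hnotcol : a ∉ cliqueColors μ ↑S := by
    rw [core_colors μ M hproper h1 h2 h3 hcomm x0 S hx0 hcl]
    simp only [Finset.coe_image, Set.mem_image, Finset.mem_coe, Finset.mem_erase]
    rintro ⟨v, ⟨hv0, hvS⟩, hva⟩
    have hv : v = M a x0 := h3 a x0 v hv0 (by rw [Sym2.eq_swap]; exact hva)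
    exact hw ((hwa.trans hv.symm) ▸ hvS)
  have hedge : ∀ u ∈ S, ∀ v ∈ S, u ≠ v → μ s(u, v) ≠ a := by
    intro u hu v hv huv h
    exact hnotcol ⟨u, hu, v, hv, huv, h⟩
  have hdisjS : ∀ u ∈ S, M a u ∉ S := by
    intro u hu hmem
    rcases eq_or_ne u x0 with rfl | hu0
    · exact hw (hwa ▸ hmem)
    · exact hedge (M a u) hmem u hu (h2 a u) (h1 a u)
  have hinj : Function.Injective (M a) := fun u v h => by
    rw [← hinv a u, h, hinv]
  have hdisj : Disjoint S (S.image (M a)) := by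
    rw [Finset.disjoint_right]
    rintro x hx hxS
    obtain ⟨u, hu, rfl⟩ := Finset.mem_image.mp hx
    exact hdisjS u hu hxS
  refine ⟨S ∪ S.image (M a), Finset.mem_union_left _ hx0, ?_, ?_⟩
  · rw [Finset.card_union_of_disjoint hdisj, Finset.card_image_of_injective _ hinj]
    omega
  intro v hv hv0 u hu
  rcases Finset.mem_union.mp hv with hvS | hvI
  · have hba : μ s(x0, v) ≠ a := fun h =>
      hnotcol ⟨x0, hx0, v, hvS, Ne.symm hv0, h⟩
    rcases Finset.mem_union.mp hu with huS | huI
    · exact Finset.mem_union_left _ (hcl v hvS hv0 u huS)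
    · obtain ⟨y, hy, rfl⟩ := Finset.mem_image.mp huI
      rw [hcomm _ a hba y]
      exact Finset.mem_union_right _ (Finset.mem_image_of_mem _ (hcl v hvS hv0 y hy))
  · obtain ⟨x, hxS, rfl⟩ := Finset.mem_image.mp hvI
    rcases eq_or_ne x x0 with heq | hx0'
    · subst heq
      have hb : μ s(x, M a x) = a := by rw [Sym2.eq_swap]; exact h1 a x
      rw [hb]
      rcases Finset.mem_union.mp hu with huS | huI
      · exact Finset.mem_union_right _ (Finset.mem_image_of_mem _ huS)
      · obtain ⟨y, hy, rfl⟩ := Finset.mem_image.mp huI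
        rw [hinv]
        exact Finset.mem_union_left _ hy
    · obtain ⟨d, hdx⟩ : ∃ d, x = M d x0 := ⟨_, h3 _ x0 x hx0' (by rw [Sym2.eq_swap])⟩
      have hdcol : μ s(x0, x) = d := by rw [Sym2.eq_swap, hdx]; exact h1 d x0
      have hda : d ≠ a := by
        intro h
        have : w = x := by rw [hwa, ← h, ← hdx]
        exact hw (this ▸ hxS)
      have hMax : M a x = M d (M a x0) := by rw [hdx, hcomm a d hda.symm]
      have hcol : μ s(x0, M a x) = μ s(M d (M a x0), x0) := by rw [hMax, Sym2.eq_swap]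
      rw [hcol, core_prod μ M h1 h2 h3 hcomm a d hda.symm x0 u]
      rcases Finset.mem_union.mp hu with huS | huI
      · rw [← hcomm a d hda.symm u]
        have hMdu : M d u ∈ S := hdcol ▸ hcl x hxS hx0' u huS
        exact Finset.mem_union_right _ (Finset.mem_image_of_mem _ hMdu)
      · obtain ⟨y, hy, rfl⟩ := Finset.mem_image.mp huI
        rw [hinv]
        exact Finset.mem_union_left _ (hdcol ▸ hcl x hxS hx0' y hy)

/-- **Lemma 2(b).** If `μ` is a proper `(2m-1)`-edge-coloring of `K_{2m}`, `m ≥ 2`,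
such that any two distinct colors induce a `C4`-factor, and `2m = 2ⁿ`, then for every
`1 ≤ k ≤ n - 1` there is a set of `2ᵏ` vertices whose induced clique uses exactly
`2ᵏ - 1` colors. -/
theorem exists_clique_with_few_colors (m n : ℕ) (hm : 2 ≤ m)
    (μ : Sym2 (Fin (2 * m)) → Fin (2 * m - 1))
    (hproper : IsProperEdgeColoring μ)
    (hC4 : ∀ a b : Fin (2 * m - 1), a ≠ b → IsC4Factor (colorPairGraph μ a b))
    (hpow : 2 * m = 2 ^ n) :
    ∀ k : ℕ, 1 ≤ k → k ≤ n - 1 →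
      ∃ S : Set (Fin (2 * m)), S.ncard = 2 ^ k ∧
        (cliqueColors μ S).ncard = 2 ^ k - 1 := by
  haveI : NeZero (2 * m) := ⟨by omega⟩
  -- existence of the matching maps
  have hex : ∀ (c : Fin (2 * m - 1)) (v : Fin (2 * m)), ∃ u, u ≠ v ∧ μ s(u, v) = c := by
    intro c v
    obtain ⟨b, hb⟩ : ∃ b, b ≠ c :=
      Fintype.exists_ne_of_one_lt_card (by simp; omega) c
    have hreg := (hC4 c b (Ne.symm hb)).1 v
    rw [Set.ncard_eq_two] at hreg
    obtain ⟨x, y, hxy, hset⟩ := hreg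
    have hx : x ∈ (colorPairGraph μ c b).neighborSet v := by rw [hset]; simp
    have hy : y ∈ (colorPairGraph μ c b).neighborSet v := by rw [hset]; simp
    have hx' : v ≠ x ∧ (μ s(v, x) = c ∨ μ s(v, x) = b) := hx
    have hy' : v ≠ y ∧ (μ s(v, y) = c ∨ μ s(v, y) = b) := hy
    rcases hx'.2 with h | h
    · exact ⟨x, hx'.1.symm, by rw [Sym2.eq_swap]; exact h⟩
    · rcases hy'.2 with h' | h'
      · exact ⟨y, hy'.1.symm, by rw [Sym2.eq_swap]; exact h'⟩
      · exact absurd (h.trans h'.symm) (hproper v x y hx'.1 hy'.1 hxy)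
  choose Mf hMne hMcol using hex
  -- uniqueness
  have h3 : ∀ c v u, u ≠ v → μ s(u, v) = c → u = Mf c v := by
    intro c v u huv hcu
    by_contra hne
    apply hproper v u (Mf c v) huv.symm (Ne.symm (hMne c v)) hne
    rw [show (s(v, u) : Sym2 (Fin (2 * m))) = s(u, v) from Sym2.eq_swap, hcu,
      show (s(v, Mf c v) : Sym2 (Fin (2 * m))) = s(Mf c v, v) from Sym2.eq_swap, hMcol]
  have hinv : ∀ c v, Mf c (Mf c v) = v := by
    intro c v
    exact (h3 c (Mf c v) v (Ne.symm (hMne c v))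
      (by rw [Sym2.eq_swap]; exact hMcol c v)).symm
  -- commutativity
  have hcomm : ∀ a b : Fin (2 * m - 1), a ≠ b → ∀ v, Mf a (Mf b v) = Mf b (Mf a v) := by
    intro a b hab v
    have hadj : ∀ (x : Fin (2 * m)) (e), e = a ∨ e = b →
        (colorPairGraph μ a b).Adj x (Mf e x) := by
      intro x e he
      refine ⟨Ne.symm (hMne e x), ?_⟩
      rw [show (s(x, Mf e x) : Sym2 (Fin (2 * m))) = s(Mf e x, x) from Sym2.eq_swap, hMcol]
      exact he
    have hsupp := (hC4 a b hab).2 ((colorPairGraph μ a b).connectedComponentMk v)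
    have hmem : ∀ x, (colorPairGraph μ a b).Reachable x v →
        x ∈ ((colorPairGraph μ a b).connectedComponentMk v).supp := by
      intro x hx
      rw [SimpleGraph.ConnectedComponent.mem_supp_iff]
      exact SimpleGraph.ConnectedComponent.sound hx
    have r1 := ((hadj v a (Or.inl rfl)).reachable).symm
    have r2 := ((hadj v b (Or.inr rfl)).reachable).symm
    have r3 := (((hadj (Mf a v) b (Or.inr rfl)).reachable).symm).trans r1
    have r4 := (((hadj (Mf b v) a (Or.inl rfl)).reachable).symm).trans r2
    have d3 : Mf a v ≠ Mf b v := by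
      intro h; apply hab; rw [← hMcol a v, h, hMcol]
    have d4 : Mf b (Mf a v) ≠ v := by
      intro h
      have h5 := congrArg (Mf b) h
      rw [hinv] at h5
      exact d3 h5
    have d6 : Mf b (Mf a v) ≠ Mf b v := by
      intro h
      have h5 := congrArg (Mf b) h
      rw [hinv, hinv] at h5
      exact hMne a v h5
    have hsub : ({v, Mf a v, Mf b v, Mf b (Mf a v)} : Set (Fin (2 * m))) ⊆
        ((colorPairGraph μ a b).connectedComponentMk v).supp := by
      intro x hx
      rcases hx with rfl | rfl | rfl | rfl
      · exact hmem _ (SimpleGraph.Reachable.refl _)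
      · exact hmem _ r1
      · exact hmem _ r2
      · exact hmem _ r3
    have hS4 : ({v, Mf a v, Mf b v, Mf b (Mf a v)} : Set (Fin (2 * m))).ncard = 4 := by
      rw [Set.ncard_insert_of_notMem (by
          simp only [Set.mem_insert_iff, Set.mem_singleton_iff]
          push_neg
          exact ⟨Ne.symm (hMne a v), Ne.symm (hMne b v), Ne.symm d4⟩),
        Set.ncard_insert_of_notMem (by
          simp only [Set.mem_insert_iff, Set.mem_singleton_iff]
          push_neg
          exact ⟨d3, Ne.symm (hMne b (Mf a v))⟩),
        Set.ncard_insert_of_notMem (by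
          simp only [Set.mem_singleton_iff]
          exact Ne.symm d6),
        Set.ncard_singleton]
    have heq : ({v, Mf a v, Mf b v, Mf b (Mf a v)} : Set (Fin (2 * m))) =
        ((colorPairGraph μ a b).connectedComponentMk v).supp :=
      Set.eq_of_subset_of_ncard_le hsub (by rw [hsupp, hS4]) (Set.toFinite _)
    have hin := hmem _ r4
    rw [← heq] at hin
    rcases hin with h | h | h | h
    · exfalso
      have h5 := congrArg (Mf a) h
      rw [hinv] at h5
      exact d3 h5.symm
    · exfalso
      have h5 := congrArg (Mf a) h
      rw [hinv, hinv] at h5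
      exact hMne b v h5
    · exact absurd h (hMne a (Mf b v))
    · exact h
  -- induction
  have hcardV : Fintype.card (Fin (2 * m)) = 2 ^ n := by simp [hpow]
  have aux : ∀ k, k ≤ n → ∃ S : Finset (Fin (2 * m)), (0 : Fin (2 * m)) ∈ S ∧
      S.card = 2 ^ k ∧ ∀ v ∈ S, v ≠ 0 → ∀ u ∈ S, Mf (μ s(0, v)) u ∈ S := by
    intro k
    induction k with
    | zero =>
      intro _
      refine ⟨{0}, by simp, by simp, ?_⟩
      intro v hv hv0
      simp only [Finset.mem_singleton] at hv
      exact absurd hv hv0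
    | succ k ih =>
      intro hk
      obtain ⟨S, hx0, hcard', hcl⟩ := ih (by omega)
      have hlt : S.card < Fintype.card (Fin (2 * m)) := by
        rw [hcard', hcardV]
        exact Nat.pow_lt_pow_right one_lt_two (by omega)
      obtain ⟨w, hw⟩ : ∃ w, w ∉ S := by
        by_contra h
        push_neg at h
        rw [Finset.eq_univ_iff_forall.mpr h, Finset.card_univ] at hlt
        exact absurd hlt (lt_irrefl _)
      obtain ⟨T, hT1, hT2, hT3⟩ :=
        core_step μ Mf hproper hMcol hMne h3 hcomm 0 S hx0 hcl w hw
      exact ⟨T, hT1, by rw [hT2, hcard']; ring, hT3⟩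
  intro k hk1 hk2
  obtain ⟨S, hx0, hcardS, hcl⟩ := aux k (by omega)
  refine ⟨↑S, by rw [Set.ncard_coe_finset, hcardS], ?_⟩
  rw [core_colors_card μ Mf hproper hMcol hMne h3 hcomm 0 S hx0 hcl, hcardS]
end

section
/- Let μ be a proper 7-edge-coloring of the complete graph K_8 such that every two distinct colors induce a C4-factor. Then the edge set of K_8 can be partitioned into 4 multicolored spanning trees that are pairwise isomorphic as graphs. -/
abbrev W : Type := Bool × Bool × Bool

def wxor (u v : W) : W := (xor u.1 v.1, xor u.2.1 v.2.1, xor u.2.2 v.2.2)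

def wzero : W := (false, false, false)

def cEdges : Fin 4 → List (W × W)
  | 0 => [((false, false, false), (true, false, false)), ((false, false, false), (false, true, false)), ((false, false, true), (true, true, true)), ((false, false, false), (false, false, true)), ((true, true, false), (false, true, true)), ((true, true, false), (true, false, true)), ((true, false, false), (false, true, true))]
  | 1 => [((false, true, false), (true, true, false)), ((true, false, false), (true, true, false)), ((true, false, true), (false, true, true)), ((true, false, false), (true, false, true)), ((false, false, false), (true, false, true)), ((false, true, false), (false, false, true)), ((false, false, false), (true, true, true))]
  | 2 => [((false, false, true), (true, false, true)), ((false, false, true), (false, true, true)), ((false, false, false), (true, true, false)), ((false, true, false), (false, true, true)), ((false, true, false), (true, true, true)), ((true, false, false), (true, true, true)), ((true, true, false), (false, false, true))]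
  | 3 => [((false, true, true), (true, true, true)), ((true, false, true), (true, true, true)), ((true, false, false), (false, true, false)), ((true, true, false), (true, true, true)), ((true, false, false), (false, false, true)), ((false, false, false), (false, true, true)), ((false, true, false), (true, false, true))]
def cPerm1 : W → W
  | (false, false, false) => (true, false, true)
  | (true, false, false) => (true, false, false)
  | (false, true, false) => (false, true, true)
  | (true, true, false) => (false, true, false)
  | (false, false, true) => (false, false, false)
  | (true, false, true) => (false, false, true)
  | (false, true, true) => (true, true, false)
  | (true, true, true) => (true, true, true)
def cPermInv1 : W → W
  | (false, false, false) => (false, false, true)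
  | (true, false, false) => (true, false, false)
  | (false, true, false) => (true, true, false)
  | (true, true, false) => (false, true, true)
  | (false, false, true) => (true, false, true)
  | (true, false, true) => (false, false, false)
  | (false, true, true) => (false, true, false)
  | (true, true, true) => (true, true, true)
def cPerm2 : W → W
  | (false, false, false) => (false, false, true)
  | (true, false, false) => (false, true, true)
  | (false, true, false) => (true, false, true)
  | (true, true, false) => (true, true, true)
  | (false, false, true) => (true, true, false)
  | (true, false, true) => (true, false, false)
  | (false, true, true) => (false, true, false)
  | (true, true, true) => (false, false, false)
def cPermInv2 : W → W
  | (false, false, false) => (true, true, true)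
  | (true, false, false) => (true, false, true)
  | (false, true, false) => (false, true, true)
  | (true, true, false) => (false, false, true)
  | (false, false, true) => (false, false, false)
  | (true, false, true) => (false, true, false)
  | (false, true, true) => (true, false, false)
  | (true, true, true) => (true, true, false)
def cPerm3 : W → W
  | (false, false, false) => (true, true, true)
  | (true, false, false) => (true, false, true)
  | (false, true, false) => (true, true, false)
  | (true, true, false) => (true, false, false)
  | (false, false, true) => (false, true, true)
  | (true, false, true) => (false, false, true)
  | (false, true, true) => (false, true, false)
  | (true, true, true) => (false, false, false)
def cPermInv3 : W → W
  | (false, false, false) => (true, true, true)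
  | (true, false, false) => (true, true, false)
  | (false, true, false) => (false, true, true)
  | (true, true, false) => (false, true, false)
  | (false, false, true) => (true, false, true)
  | (true, false, true) => (true, false, false)
  | (false, true, true) => (false, false, true)
  | (true, true, true) => (false, false, false)

def cAdjB (i : Fin 4) (u v : W) : Bool :=
  (cEdges i).contains (u, v) || (cEdges i).contains (v, u)

def cT (i : Fin 4) : SimpleGraph W where
  Adj u v := cAdjB i u v = true
  symm := by
    have h : ∀ i : Fin 4, ∀ u v : W, cAdjB i u v = true → cAdjB i v u = true := by decide
    constructor
    intro u v hu
    exact h i u v hu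
  loopless := by
    have h : ∀ i : Fin 4, ∀ u : W, ¬(cAdjB i u u = true) := by decide
    constructor
    intro v hv
    exact h i v hv

instance cTDec (i : Fin 4) : DecidableRel (cT i).Adj := fun _ _ =>
  inferInstanceAs (Decidable (_ = true))

set_option maxHeartbeats 2000000 in
lemma cT0_preconnected : (cT 0).Preconnected := by decide

instance cTdel (e : Sym2 W) : DecidableRel (cT 0 \ SimpleGraph.fromEdgeSet {e}).Adj :=
  fun x y => decidable_of_iff ((cT 0).Adj x y ∧ ¬(s(x, y) = e ∧ x ≠ y)) (by
    rw [SimpleGraph.sdiff_adj, SimpleGraph.fromEdgeSet_adj]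
    simp)

set_option maxHeartbeats 4000000 in
lemma cT0_bridges : ∀ v w : W, (cT 0).Adj v w →
    ¬(cT 0 \ SimpleGraph.fromEdgeSet {s(v, w)}).Reachable v w := by decide

lemma cT0_isTree : (cT 0).IsTree := by
  constructor
  · exact SimpleGraph.Connected.mk cT0_preconnected
  · rw [SimpleGraph.isAcyclic_iff_forall_adj_isBridge]
    intro v w h
    rw [SimpleGraph.isBridge_iff]
    exact cT0_bridges v w h

def cPermE (i : Fin 4) : W ≃ W :=
  match i with
  | 0 => Equiv.refl W
  | 1 => ⟨cPerm1, cPermInv1, by decide, by decide⟩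
  | 2 => ⟨cPerm2, cPermInv2, by decide, by decide⟩
  | 3 => ⟨cPerm3, cPermInv3, by decide, by decide⟩

lemma cPermE_adj : ∀ i : Fin 4, ∀ a b : W,
    (cT i).Adj (cPermE i a) (cPermE i b) ↔ (cT 0).Adj a b := by decide

def cIso (i : Fin 4) : cT 0 ≃g cT i :=
  ⟨cPermE i, fun {a b} => cPermE_adj i a b⟩

lemma isTree_of_iso {V V' : Type*} {G : SimpleGraph V} {H : SimpleGraph V'}
    (e : G ≃g H) (h : G.IsTree) : H.IsTree := by
  constructor
  · exact e.connected_iff.mp h.isConnected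
  · intro v c hc
    exact h.IsAcyclic (c.map e.symm.toHom)
      ((SimpleGraph.Walk.map_isCycle_iff_of_injective e.symm.toEquiv.injective).mpr hc)

lemma cT_isTree (i : Fin 4) : (cT i).IsTree := isTree_of_iso (cIso i) cT0_isTree

-- one edge of each xor-value per tree
lemma cT_rainbow : ∀ i : Fin 4, ∀ u v u' v' : W, (cT i).Adj u v → (cT i).Adj u' v' →
    wxor u v = wxor u' v' → ((u = u' ∧ v = v') ∨ (u = v' ∧ v = u')) := by decide

lemma cT_disjoint : ∀ i j : Fin 4, i ≠ j → ∀ u v : W,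
    ¬((cT i).Adj u v ∧ (cT j).Adj u v) := by decide

lemma cT_cover : ∀ u v : W, u ≠ v → ∃ i : Fin 4, (cT i).Adj u v := by decide

lemma wxor_eq_wzero_iff : ∀ u v : W, wxor u v = wzero ↔ u = v := by decide

lemma wxor_cancel : ∀ u v : W, wxor u (wxor u v) = v := by decide

/-! ### Abstract commuting-involutions machinery -/

def kapp : Bool → (Fin 8 → Fin 8) → Fin 8 → Fin 8
  | true, g, v => g v
  | false, _, v => v

def kact (g1 g2 g3 : Fin 8 → Fin 8) (w : W) (v : Fin 8) : Fin 8 :=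
  kapp w.1 g1 (kapp w.2.1 g2 (kapp w.2.2 g3 v))

lemma kact_kact {g1 g2 g3 : Fin 8 → Fin 8}
    (h11 : ∀ t, g1 (g1 t) = t) (h22 : ∀ t, g2 (g2 t) = t) (h33 : ∀ t, g3 (g3 t) = t)
    (h21 : ∀ t, g2 (g1 t) = g1 (g2 t)) (h31 : ∀ t, g3 (g1 t) = g1 (g3 t))
    (h32 : ∀ t, g3 (g2 t) = g2 (g3 t)) (m n : W) (v : Fin 8) :
    kact g1 g2 g3 m (kact g1 g2 g3 n v) = kact g1 g2 g3 (wxor m n) v := by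
  obtain ⟨a1, a2, a3⟩ := m
  obtain ⟨b1, b2, b3⟩ := n
  cases a1 <;> cases a2 <;> cases a3 <;> cases b1 <;> cases b2 <;> cases b3 <;>
    simp [kact, kapp, wxor, h11, h22, h33, h21, h31, h32]

lemma kact_pres (μ : Sym2 (Fin 8) → Fin 7) {g1 g2 g3 : Fin 8 → Fin 8}
    (h11 : ∀ t, g1 (g1 t) = t) (h22 : ∀ t, g2 (g2 t) = t) (h33 : ∀ t, g3 (g3 t) = t)
    (p1 : ∀ x y, x ≠ y → μ s(g1 x, g1 y) = μ s(x, y))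
    (p2 : ∀ x y, x ≠ y → μ s(g2 x, g2 y) = μ s(x, y))
    (p3 : ∀ x y, x ≠ y → μ s(g3 x, g3 y) = μ s(x, y))
    (m : W) (x y : Fin 8) (hxy : x ≠ y) :
    μ s(kact g1 g2 g3 m x, kact g1 g2 g3 m y) = μ s(x, y) := by
  have n1 : ∀ x y : Fin 8, x ≠ y → g1 x ≠ g1 y := by
    intro x y h hc; exact h (by rw [← h11 x, hc, h11 y])
  have n2 : ∀ x y : Fin 8, x ≠ y → g2 x ≠ g2 y := by
    intro x y h hc; exact h (by rw [← h22 x, hc, h22 y])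
  have n3 : ∀ x y : Fin 8, x ≠ y → g3 x ≠ g3 y := by
    intro x y h hc; exact h (by rw [← h33 x, hc, h33 y])
  obtain ⟨b1, b2, b3⟩ := m
  cases b1 <;> cases b2 <;> cases b3 <;> simp only [kact, kapp]
  · exact p3 _ _ hxy
  · exact p2 _ _ hxy
  · exact (p2 _ _ (n3 _ _ hxy)).trans (p3 _ _ hxy)
  · exact p1 _ _ hxy
  · exact (p1 _ _ (n3 _ _ hxy)).trans (p3 _ _ hxy)
  · exact (p1 _ _ (n2 _ _ hxy)).trans (p2 _ _ hxy)
  · exact (p1 _ _ (n2 _ _ (n3 _ _ hxy))).trans ((p2 _ _ (n3 _ _ hxy)).trans (p3 _ _ hxy))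

lemma edgeSet_map' {V V' : Type*} (f : V ↪ V') (G : SimpleGraph V) :
    (G.map f).edgeSet = Sym2.map f '' G.edgeSet := by
  ext e
  refine Sym2.ind (fun x y => ?_) e
  simp only [SimpleGraph.mem_edgeSet, SimpleGraph.map_adj, Set.mem_image]
  constructor
  · rintro ⟨u, v, h, rfl, rfl⟩
    exact ⟨s(u, v), h, Sym2.map_pair_eq f u v⟩
  · rintro ⟨e', he', hmap⟩
    revert he' hmap
    refine Sym2.ind (fun u v he' hmap => ?_) e'
    rw [Sym2.map_pair_eq, Sym2.eq_iff] at hmap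
    rcases hmap with ⟨rfl, rfl⟩ | ⟨rfl, rfl⟩
    · exact ⟨u, v, he', rfl, rfl⟩
    · exact ⟨v, u, he'.symm, rfl, rfl⟩

lemma wxor_self : ∀ m : W, wxor m m = wzero := by decide

/-- **Lemma 3.** If `μ` is a proper 7-edge-coloring of `K₈` such that any two distinct
colors induce a `C4`-factor, then the edges of `K₈` can be partitioned into 4 pairwise
isomorphic multicolored spanning trees. -/
theorem K8_partition_into_four_isomorphic_multicolored_spanning_trees
    (μ : Sym2 (Fin 8) → Fin 7)
    (hproper : IsProperEdgeColoring μ)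
    (hC4 : ∀ a b : Fin 7, a ≠ b → IsC4Factor (colorPairGraph μ a b)) :
    ∃ T : Fin 4 → SimpleGraph (Fin 8),
      (∀ i, (T i).IsTree) ∧
      (∀ i, Set.InjOn μ (T i).edgeSet) ∧
      (∀ i j, i ≠ j → Disjoint (T i).edgeSet (T j).edgeSet) ∧
      (⋃ i, (T i).edgeSet) = (⊤ : SimpleGraph (Fin 8)).edgeSet ∧
      (∀ i j, Nonempty (T i ≃g T j)) := by
  classical
  -- For every color `a` and vertex `v`, there is a unique vertex `f a v ≠ v` joined to `v`
  -- by an edge of color `a` (so each color class is a perfect matching).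
  have exu : ∀ (a : Fin 7) (v : Fin 8), ∃! w : Fin 8, w ≠ v ∧ μ s(v, w) = a := by
    intro a v
    have hex : ∃ w, w ≠ v ∧ μ s(v, w) = a := by
      by_contra hne
      push_neg at hne
      have hsub : (Finset.univ.erase v).image (fun w => μ s(v, w)) ⊆
          Finset.univ.erase a := by
        intro c hc
        rw [Finset.mem_image] at hc
        obtain ⟨w, hw, rfl⟩ := hc
        exact Finset.mem_erase.mpr ⟨hne w (Finset.mem_erase.mp hw).1, Finset.mem_univ _⟩
      have hcard : ((Finset.univ.erase v).image (fun w => μ s(v, w))).card =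
          (Finset.univ.erase v).card := by
        apply Finset.card_image_of_injOn
        intro x hx y hy hxy
        by_contra hne'
        exact hproper v x y (Ne.symm (Finset.mem_erase.mp hx).1)
          (Ne.symm (Finset.mem_erase.mp hy).1) hne' hxy
      have h1 := Finset.card_le_card hsub
      rw [hcard] at h1
      simp [Finset.card_erase_of_mem] at h1
    obtain ⟨w, hw⟩ := hex
    refine ⟨w, hw, ?_⟩
    intro y hy
    by_contra hne'
    exact hproper v y w (Ne.symm hy.1) (Ne.symm hw.1) hne' (hy.2.trans hw.2.symm)
  choose f hf using exu
  have hne0 : ∀ a v, f a v ≠ v := fun a v => (hf a v).1.1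
  have hcol : ∀ a v, μ s(v, f a v) = a := fun a v => (hf a v).1.2
  have huni : ∀ a v y, y ≠ v → μ s(v, y) = a → y = f a v :=
    fun a v y h1 h2 => (hf a v).2 y ⟨h1, h2⟩
  have hinv : ∀ a v, f a (f a v) = v := by
    intro a v
    exact (huni a (f a v) v (Ne.symm (hne0 a v))
      (by rw [Sym2.eq_swap]; exact hcol a v)).symm
  have hstep : ∀ a (x y : Fin 8), x ≠ y → f a x ≠ f a y := by
    intro a x y hxy hc
    exact hxy (by rw [← hinv a x, hc, hinv a y])
  have hfne : ∀ a b v, a ≠ b → f a v ≠ f b v := by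
    intro a b v hab hc
    exact hab (by rw [← hcol a v, hc, hcol b v])
  -- the key commutation property, from the C4-factor hypothesis
  have hcomm : ∀ a b v, a ≠ b → f a (f b v) = f b (f a v) := by
    intro a b v hab
    have hsupp := (hC4 a b hab).2
    have hadj : ∀ p : Fin 8, (colorPairGraph μ a b).Adj p (f a p) ∧
        (colorPairGraph μ a b).Adj p (f b p) := by
      intro p
      exact ⟨show p ≠ f a p ∧ (μ s(p, f a p) = a ∨ μ s(p, f a p) = b) from ⟨Ne.symm (hne0 a p), Or.inl (hcol a p)⟩, show p ≠ f b p ∧ (μ s(p, f b p) = a ∨ μ s(p, f b p) = b) from ⟨Ne.symm (hne0 b p), Or.inr (hcol b p)⟩⟩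
    set G := colorPairGraph μ a b with hG
    set x := f a v with hx
    set y := f b v with hy
    set z := f b x with hz
    have hxy' : x ≠ y := hfne a b v hab
    have hvx : v ≠ x := Ne.symm (hne0 a v)
    have hvy : v ≠ y := Ne.symm (hne0 b v)
    have hxz : x ≠ z := Ne.symm (hne0 b x)
    have hvz : v ≠ z := by
      intro h
      apply hxy'.symm
      rw [hy, ← hinv b x, ← hz, ← h]
    have hyz : y ≠ z := by
      intro h
      apply hvx
      rw [← hinv b v, ← hy, h, hz, hinv b x]
    set c := G.connectedComponentMk v with hc
    have hxc : G.connectedComponentMk x = c := (SimpleGraph.ConnectedComponent.sound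
      ((hadj v).1.reachable)).symm
    have hyc : G.connectedComponentMk y = c := (SimpleGraph.ConnectedComponent.sound
      ((hadj v).2.reachable)).symm
    have hzc : G.connectedComponentMk z = c := by
      rw [← hxc]
      exact (SimpleGraph.ConnectedComponent.sound ((hadj x).2.reachable)).symm
    have hS : ({v, x, y, z} : Set (Fin 8)) ⊆ c.supp := by
      intro t ht
      rcases ht with rfl | rfl | rfl | rfl
      · exact (SimpleGraph.ConnectedComponent.mem_supp_iff c t).mpr rfl
      · exact (SimpleGraph.ConnectedComponent.mem_supp_iff c _).mpr hxc
      · exact (SimpleGraph.ConnectedComponent.mem_supp_iff c _).mpr hyc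
      · exact (SimpleGraph.ConnectedComponent.mem_supp_iff c _).mpr hzc
    have hcard : ({v, x, y, z} : Set (Fin 8)).ncard = 4 := by
      rw [Set.ncard_insert_of_notMem (by simp [hvx, hvy, hvz]),
        Set.ncard_insert_of_notMem (by simp [hxy', hxz]),
        Set.ncard_insert_of_notMem (by simp [hyz]), Set.ncard_singleton]
    have hSeq : ({v, x, y, z} : Set (Fin 8)) = c.supp :=
      Set.eq_of_subset_of_ncard_le hS (by rw [hsupp c, hcard])
    have hwc : f a y ∈ c.supp := by
      rw [SimpleGraph.ConnectedComponent.mem_supp_iff, ← hyc]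
      exact SimpleGraph.ConnectedComponent.sound ((hadj y).1.symm.reachable)
    rw [← hSeq] at hwc
    rcases hwc with h | h | h | h
    · exfalso
      apply hxy'.symm
      rw [hx, ← hinv a y, h]
    · exfalso
      have hyv : y = v := by rw [← hinv a y, h, hx, hinv a v]
      exact hvy hyv.symm
    · exact absurd h (hne0 a y)
    · exact h
  -- edge-color preservation under the involutions
  have hpres : ∀ a (x y : Fin 8), x ≠ y → μ s(f a x, f a y) = μ s(x, y) := by
    intro a x y hxy
    by_cases hb : μ s(x, y) = a
    · have hyx : y = f a x := huni a x y (Ne.symm hxy) hb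
      have hxx : f a y = x := by rw [hyx, hinv]
      calc μ s(f a x, f a y) = μ s(y, x) := by rw [hxx, ← hyx]
        _ = μ s(x, y) := by rw [Sym2.eq_swap]
    · set b' := μ s(x, y) with hbdef
      have hab : a ≠ b' := fun h => hb h.symm
      have hyx : y = f b' x := huni b' x y (Ne.symm hxy) hbdef.symm
      have h2 : f a y = f b' (f a x) := by rw [hyx, hcomm a b' x hab]
      rw [h2]
      exact hcol b' (f a x)
  -- choose three independent basis colors
  set c1 := μ s(0, 1) with hc1
  set c2 := μ s(0, 2) with hc2
  have hf1z : f c1 0 = 1 := (huni c1 0 1 (by decide) hc1.symm).symm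
  have hf2z : f c2 0 = 2 := (huni c2 0 2 (by decide) hc2.symm).symm
  have hc12 : c1 ≠ c2 := hproper 0 1 2 (by decide) (by decide) (by decide)
  obtain ⟨u, hu0, hu1, hu2, hu3⟩ :
      ∃ u : Fin 8, u ≠ 0 ∧ u ≠ 1 ∧ u ≠ 2 ∧ u ≠ f c1 2 := by
    by_contra hcon
    push_neg at hcon
    have hsub : (Finset.univ : Finset (Fin 8)) ⊆ {0, 1, 2, f c1 2} := by
      intro t _
      simp only [Finset.mem_insert, Finset.mem_singleton]
      by_cases h0 : t = 0
      · exact Or.inl h0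
      by_cases h1 : t = 1
      · exact Or.inr (Or.inl h1)
      by_cases h2 : t = 2
      · exact Or.inr (Or.inr (Or.inl h2))
      exact Or.inr (Or.inr (Or.inr (hcon t h0 h1 h2)))
    have hcard := Finset.card_le_card hsub
    have t3 : ({2, f c1 2} : Finset (Fin 8)).card ≤ 2 :=
      (Finset.card_insert_le _ _).trans (by simp)
    have t2 : ({1, 2, f c1 2} : Finset (Fin 8)).card ≤ 3 :=
      (Finset.card_insert_le _ _).trans (by omega)
    have t1 : ({0, 1, 2, f c1 2} : Finset (Fin 8)).card ≤ 4 :=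
      (Finset.card_insert_le _ _).trans (by omega)
    rw [Finset.card_univ] at hcard
    simp only [Fintype.card_fin] at hcard
    omega
  set c3 := μ s(0, u) with hc3
  have hf3z : f c3 0 = u := (huni c3 0 u hu0 hc3.symm).symm
  have hc13 : c1 ≠ c3 := hproper 0 1 u (by decide) (Ne.symm hu0) (Ne.symm hu1)
  have hc23 : c2 ≠ c3 := hproper 0 2 u (by decide) (Ne.symm hu0) (Ne.symm hu2)
  have H21 : ∀ t, f c2 (f c1 t) = f c1 (f c2 t) := fun t => hcomm c2 c1 t (Ne.symm hc12)
  have H31 : ∀ t, f c3 (f c1 t) = f c1 (f c3 t) := fun t => hcomm c3 c1 t (Ne.symm hc13)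
  have H32 : ∀ t, f c3 (f c2 t) = f c2 (f c3 t) := fun t => hcomm c3 c2 t (Ne.symm hc23)
  have hAA := kact_kact (hinv c1) (hinv c2) (hinv c3) H21 H31 H32
  have hPP := kact_pres μ (hinv c1) (hinv c2) (hinv c3) (hpres c1) (hpres c2) (hpres c3)
  set σ : W → Fin 8 := fun w => kact (f c1) (f c2) (f c3) w 0 with hσ
  have hact0 : ∀ w : W, σ w = 0 → w = wzero := by
    intro w hw
    rw [hσ] at hw
    obtain ⟨b1, b2, b3⟩ := w
    cases b1 <;> cases b2 <;> cases b3 <;> simp only [kact, kapp] at hw ⊢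
    · rfl
    · rw [hf3z] at hw
      exact absurd hw hu0
    · rw [hf2z] at hw
      exact absurd hw (by decide)
    · rw [hf3z] at hw
      have h2 : u = (2 : Fin 8) := by rw [← hinv c2 u, hw, hf2z]
      exact absurd h2 hu2
    · rw [hf1z] at hw
      exact absurd hw (by decide)
    · rw [hf3z] at hw
      have h2 : u = (1 : Fin 8) := by rw [← hinv c1 u, hw, hf1z]
      exact absurd h2 hu1
    · rw [hf2z] at hw
      have h2 : (2 : Fin 8) = 1 := by rw [← hinv c1 2, hw, hf1z]
      exact absurd h2 (by decide)
    · rw [hf3z] at hw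
      have hg : f c2 u = 1 := by rw [← hinv c1 (f c2 u), hw, hf1z]
      have hu' : u = f c2 1 := by rw [← hinv c2 u, hg]
      have h21 : f c2 1 = f c1 2 := by
        have h := H21 0
        rwa [hf1z, hf2z] at h
      exact absurd (hu'.trans h21) hu3
  have hσinj : Function.Injective σ := by
    intro m n hmn
    have h0 : σ (wxor m n) = 0 := by
      have e1 : σ (wxor m n) = kact (f c1) (f c2) (f c3) m (σ n) := (hAA m n 0).symm
      rw [e1, ← hmn, hσ]
      rw [hAA m m 0, wxor_self]
      rfl
    exact (wxor_eq_wzero_iff m n).mp (hact0 _ h0)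
  have hbij : Function.Bijective σ :=
    (Fintype.bijective_iff_injective_and_card σ).mpr ⟨hσinj, rfl⟩
  set σE : W ≃ Fin 8 := Equiv.ofBijective σ hbij with hσE
  have hemb : ∀ w : W, σE.toEmbedding w = σ w := fun w => rfl
  have hcolor : ∀ m n : W, m ≠ n → μ s(σ m, σ n) = μ s(0, σ (wxor m n)) := by
    intro m n hmn
    have hxz : σ (wxor m n) ≠ 0 := by
      intro h
      exact hmn ((wxor_eq_wzero_iff m n).mp (hact0 _ h))
    have h2 : σ n = kact (f c1) (f c2) (f c3) m (σ (wxor m n)) := by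
      conv_rhs => rw [hσ]
      rw [hAA m (wxor m n) 0, wxor_cancel]
    have h3 : σ m = kact (f c1) (f c2) (f c3) m 0 := rfl
    rw [h3, h2]
    exact hPP m 0 (σ (wxor m n)) (Ne.symm hxz)
  refine ⟨fun i => (cT i).map σE.toEmbedding, ?_, ?_, ?_, ?_, ?_⟩
  · intro i
    exact isTree_of_iso (SimpleGraph.Iso.map σE (cT i)) (cT_isTree i)
  · intro i e1 he1 e2 he2 hμe
    rw [edgeSet_map'] at he1 he2
    obtain ⟨d1, hd1, rfl⟩ := he1
    obtain ⟨d2, hd2, rfl⟩ := he2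
    revert hd1 hd2 hμe
    refine Sym2.inductionOn₂ d1 d2 (fun a b c d => ?_)
    intro hab hcd hcol2
    rw [SimpleGraph.mem_edgeSet] at hab hcd
    simp only [Sym2.map_pair_eq, hemb] at hcol2 ⊢
    have hne1 : a ≠ b := hab.ne
    have hne2 : c ≠ d := hcd.ne
    rw [hcolor a b hne1, hcolor c d hne2] at hcol2
    have hxab : σ (wxor a b) ≠ 0 := fun h => hne1 ((wxor_eq_wzero_iff _ _).mp (hact0 _ h))
    have hxcd : σ (wxor c d) ≠ 0 := fun h => hne2 ((wxor_eq_wzero_iff _ _).mp (hact0 _ h))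
    have hσeq : σ (wxor a b) = σ (wxor c d) := by
      by_contra hne'
      exact hproper 0 (σ (wxor a b)) (σ (wxor c d)) (Ne.symm hxab) (Ne.symm hxcd) hne' hcol2
    rcases cT_rainbow i a b c d hab hcd (hσinj hσeq) with ⟨rfl, rfl⟩ | ⟨rfl, rfl⟩
    · rfl
    · exact Sym2.eq_swap
  · intro i j hij
    rw [Set.disjoint_left]
    intro e hei hej
    rw [edgeSet_map'] at hei hej
    obtain ⟨d1, hd1, rfl⟩ := hei
    obtain ⟨d2, hd2, heq⟩ := hej
    have hd12 : d2 = d1 := Sym2.map.injective σE.toEmbedding.injective heq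
    rw [hd12] at hd2
    revert hd1 hd2
    refine Sym2.ind (fun a b hd1 hd2 => ?_) d1
    rw [SimpleGraph.mem_edgeSet] at hd1 hd2
    exact cT_disjoint i j hij a b ⟨hd1, hd2⟩
  · ext e
    simp only [Set.mem_iUnion]
    constructor
    · rintro ⟨i, he⟩
      exact SimpleGraph.edgeSet_mono le_top he
    · intro he
      revert he
      refine Sym2.ind (fun x y he => ?_) e
      rw [SimpleGraph.mem_edgeSet] at he
      have hxy : x ≠ y := he.ne
      have hab : σE.symm x ≠ σE.symm y := fun h =>
        hxy (by rw [← Equiv.apply_symm_apply σE x, h, Equiv.apply_symm_apply])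
      obtain ⟨i, hi⟩ := cT_cover _ _ hab
      refine ⟨i, ?_⟩
      rw [SimpleGraph.mem_edgeSet]
      exact ⟨hxy, σE.symm x, σE.symm y, hi, Equiv.apply_symm_apply σE x, Equiv.apply_symm_apply σE y⟩
  · intro i j
    exact ⟨(SimpleGraph.Iso.map σE (cT i)).symm.trans
      ((cIso i).symm.trans ((cIso j).trans (SimpleGraph.Iso.map σE (cT j))))⟩
end

section
/- Let m ≥ 3 and let φ be an arbitrary proper (2m−1)-edge-coloring of the complete graph K_{2m}. Then there exist two edge-disjoint multicolored spanning trees of K_{2m} that are isomorphic as graphs. -/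
set_option linter.unusedSectionVars false

section Partner

variable {V C : Type*} [Fintype V] [DecidableEq V] [Fintype C] {φ : Sym2 V → C}

lemma partner_exists (hp : IsProperEdgeColoring φ)
    (hcard : Fintype.card V = Fintype.card C + 1) (c : C) (v : V) :
    ∃ w, w ≠ v ∧ φ s(v, w) = c := by
  classical
  set f : {w : V // w ≠ v} → C := fun w => φ s(v, w.1) with hf
  have hinj : Function.Injective f := by
    intro w1 w2 h
    by_contra hne
    exact hp v w1.1 w2.1 (Ne.symm w1.2) (Ne.symm w2.2)
      (fun h' => hne (Subtype.ext h')) h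
  have hcard2 : Fintype.card {w : V // w ≠ v} = Fintype.card C := by
    have := Fintype.card_subtype_compl (fun w : V => w = v)
    simp only [Fintype.card_subtype_eq] at this
    have hpos : 1 ≤ Fintype.card V := by omega
    simp only [ne_eq]
    rw [this]
    omega
  have hsurj : Function.Surjective f :=
    ((Fintype.bijective_iff_injective_and_card f).2 ⟨hinj, hcard2⟩).2
  obtain ⟨w, hw⟩ := hsurj c
  exact ⟨w.1, w.2, hw⟩

noncomputable def partner (hp : IsProperEdgeColoring φ)
    (hcard : Fintype.card V = Fintype.card C + 1) (c : C) (v : V) : V :=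
  (partner_exists hp hcard c v).choose

lemma partner_ne (hp : IsProperEdgeColoring φ)
    (hcard : Fintype.card V = Fintype.card C + 1) (c : C) (v : V) :
    partner hp hcard c v ≠ v :=
  (partner_exists hp hcard c v).choose_spec.1

lemma partner_color (hp : IsProperEdgeColoring φ)
    (hcard : Fintype.card V = Fintype.card C + 1) (c : C) (v : V) :
    φ s(v, partner hp hcard c v) = c :=
  (partner_exists hp hcard c v).choose_spec.2

lemma eq_partner (hp : IsProperEdgeColoring φ)
    (hcard : Fintype.card V = Fintype.card C + 1) {c : C} {v w : V}
    (hne : w ≠ v) (hc : φ s(v, w) = c) : w = partner hp hcard c v := by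
  by_contra hne2
  exact hp v w (partner hp hcard c v) (Ne.symm hne)
    (Ne.symm (partner_ne hp hcard c v)) hne2 (hc.trans (partner_color hp hcard c v).symm)

lemma partner_partner (hp : IsProperEdgeColoring φ)
    (hcard : Fintype.card V = Fintype.card C + 1) (c : C) (v : V) :
    partner hp hcard c (partner hp hcard c v) = v := by
  refine (eq_partner hp hcard (Ne.symm (partner_ne hp hcard c v)) ?_).symm
  rw [Sym2.eq_swap]; exact partner_color hp hcard c v

end Partner

section Tree

variable {V : Type*} [DecidableEq V]

/-- star at `u` on everything except `w a`, plus pendant edges `w z₁` and `a z₂`. -/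
def treeGraph (u w a z₁ z₂ : V) : SimpleGraph V where
  Adj p q := p ≠ q ∧ ((p = u ∧ q ≠ w ∧ q ≠ a) ∨ (q = u ∧ p ≠ w ∧ p ≠ a) ∨
    s(p, q) = s(w, z₁) ∨ s(p, q) = s(a, z₂))
  symm := by
    constructor
    intro p q h
    refine ⟨h.1.symm, ?_⟩
    rcases h.2 with h | h | h | h
    · exact Or.inr (Or.inl h)
    · exact Or.inl h
    · exact Or.inr (Or.inr (Or.inl (by rw [Sym2.eq_swap]; exact h)))
    · exact Or.inr (Or.inr (Or.inr (by rw [Sym2.eq_swap]; exact h)))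
  loopless := ⟨fun p h => h.1 rfl⟩

structure TreeParams (u w a z₁ z₂ : V) : Prop where
  huw : u ≠ w
  hua : u ≠ a
  hwa : w ≠ a
  hz1u : z₁ ≠ u
  hz1w : z₁ ≠ w
  hz1a : z₁ ≠ a
  hz2u : z₂ ≠ u
  hz2w : z₂ ≠ w
  hz2a : z₂ ≠ a

variable {u w a z₁ z₂ : V}

lemma treeGraph_adj {p q : V} :
    (treeGraph u w a z₁ z₂).Adj p q ↔ p ≠ q ∧ ((p = u ∧ q ≠ w ∧ q ≠ a) ∨
      (q = u ∧ p ≠ w ∧ p ≠ a) ∨ s(p, q) = s(w, z₁) ∨ s(p, q) = s(a, z₂)) := Iff.rfl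

lemma treeGraph_edge_iff (h : TreeParams u w a z₁ z₂) {e : Sym2 V} :
    e ∈ (treeGraph u w a z₁ z₂).edgeSet ↔
      (∃ v, v ≠ u ∧ v ≠ w ∧ v ≠ a ∧ e = s(u, v)) ∨ e = s(w, z₁) ∨ e = s(a, z₂) := by
  induction e with
  | _ p q =>
    rw [SimpleGraph.mem_edgeSet, treeGraph_adj]
    constructor
    · rintro ⟨hpq, (⟨rfl, h1, h2⟩ | ⟨rfl, h1, h2⟩ | hh | hh)⟩
      · exact Or.inl ⟨q, Ne.symm hpq, h1, h2, rfl⟩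
      · exact Or.inl ⟨p, hpq, h1, h2, Sym2.eq_swap⟩
      · exact Or.inr (Or.inl hh)
      · exact Or.inr (Or.inr hh)
    · rintro (⟨v, h1, h2, h3, hv⟩ | hh | hh)
      · rw [Sym2.eq_iff] at hv
        rcases hv with ⟨rfl, rfl⟩ | ⟨rfl, rfl⟩
        · exact ⟨Ne.symm h1, Or.inl ⟨rfl, h2, h3⟩⟩
        · exact ⟨h1, Or.inr (Or.inl ⟨rfl, h2, h3⟩)⟩
      · rw [Sym2.eq_iff] at hh
        rcases hh with ⟨rfl, rfl⟩ | ⟨rfl, rfl⟩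
        · exact ⟨Ne.symm h.hz1w, Or.inr (Or.inr (Or.inl rfl))⟩
        · exact ⟨h.hz1w, Or.inr (Or.inr (Or.inl Sym2.eq_swap))⟩
      · rw [Sym2.eq_iff] at hh
        rcases hh with ⟨rfl, rfl⟩ | ⟨rfl, rfl⟩
        · exact ⟨Ne.symm h.hz2a, Or.inr (Or.inr (Or.inr rfl))⟩
        · exact ⟨h.hz2a, Or.inr (Or.inr (Or.inr Sym2.eq_swap))⟩

lemma treeGraph_connected [Nonempty V] (h : TreeParams u w a z₁ z₂) :
    (treeGraph u w a z₁ z₂).Connected := by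
  set T := treeGraph u w a z₁ z₂ with hT
  have adj_u : ∀ v : V, v ≠ u → v ≠ w → v ≠ a → T.Adj u v :=
    fun v h1 h2 h3 => ⟨Ne.symm h1, Or.inl ⟨rfl, h2, h3⟩⟩
  have hreach : ∀ v : V, T.Reachable u v := by
    intro v
    by_cases hvu : v = u
    · subst hvu; exact SimpleGraph.Reachable.refl _
    by_cases hvw : v = w
    · subst hvw
      exact ((adj_u z₁ h.hz1u h.hz1w h.hz1a).reachable).trans
        (SimpleGraph.Adj.reachable ⟨h.hz1w, Or.inr (Or.inr (Or.inl Sym2.eq_swap))⟩)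
    by_cases hva : v = a
    · subst hva
      exact ((adj_u z₂ h.hz2u h.hz2w h.hz2a).reachable).trans
        (SimpleGraph.Adj.reachable ⟨h.hz2a, Or.inr (Or.inr (Or.inr Sym2.eq_swap))⟩)
    · exact (adj_u v hvu hvw hva).reachable
  exact SimpleGraph.Connected.mk (fun p q => (hreach p).symm.trans (hreach q))

lemma reachable_closed {G : SimpleGraph V} {S : Set V}
    (hS : ∀ x y, x ∈ S → G.Adj x y → y ∈ S) {v x : V}
    (hr : G.Reachable v x) (hv : v ∈ S) : x ∈ S := by
  obtain ⟨p⟩ := hr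
  induction p with
  | nil => exact hv
  | cons hadj p ih => exact ih (hS _ _ hv hadj)

lemma treeGraph_isAcyclic (h : TreeParams u w a z₁ z₂) :
    (treeGraph u w a z₁ z₂).IsAcyclic := by
  rw [SimpleGraph.isAcyclic_iff_forall_edge_isBridge]
  intro e he
  rw [treeGraph_edge_iff h] at he
  set T := treeGraph u w a z₁ z₂ with hT
  rcases he with ⟨v, hvu, hvw, hva, rfl⟩ | rfl | rfl
  · rw [SimpleGraph.isBridge_iff]
    intro hre
    have hadjH : ∀ x y : V, (T \ SimpleGraph.fromEdgeSet {s(u, v)}).Adj x y →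
        T.Adj x y ∧ s(x, y) ≠ s(u, v) := by
      intro x y hxy
      rw [SimpleGraph.sdiff_adj, SimpleGraph.fromEdgeSet_adj] at hxy
      exact ⟨hxy.1, fun hc => hxy.2 ⟨hc, hxy.1.ne⟩⟩
    have hu : u ∈ {x : V | x = v ∨ (x = w ∧ z₁ = v) ∨ (x = a ∧ z₂ = v)} := by
      refine reachable_closed ?_ hre.symm (Or.inl rfl)
      intro x y hx hxy
      obtain ⟨hTxy, hne⟩ := hadjH x y hxy
      rcases hx with hxv | ⟨hxw, hz1v⟩ | ⟨hxa, hz2v⟩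
      · subst hxv
        rcases hTxy.2 with ⟨rfl, _, _⟩ | ⟨rfl, hw1, ha1⟩ | hh | hh
        · exact absurd rfl hvu
        · exact absurd Sym2.eq_swap hne
        · rw [Sym2.eq_iff] at hh
          rcases hh with ⟨rfl, rfl⟩ | ⟨rfl, rfl⟩
          · exact absurd rfl hvw
          · exact Or.inr (Or.inl ⟨rfl, rfl⟩)
        · rw [Sym2.eq_iff] at hh
          rcases hh with ⟨rfl, rfl⟩ | ⟨rfl, rfl⟩
          · exact absurd rfl hva
          · exact Or.inr (Or.inr ⟨rfl, rfl⟩)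
      · subst hxw
        rcases hTxy.2 with ⟨rfl, _, _⟩ | ⟨rfl, hw1, _⟩ | hh | hh
        · exact absurd rfl h.huw.symm
        · exact absurd rfl hw1
        · rw [Sym2.eq_iff] at hh
          rcases hh with ⟨_, rfl⟩ | ⟨hww, rfl⟩
          · exact Or.inl hz1v
          · exact absurd hww.symm h.hz1w
        · rw [Sym2.eq_iff] at hh
          rcases hh with ⟨hwa, _⟩ | ⟨hwz, _⟩
          · exact absurd hwa.symm h.hwa.symm
          · exact absurd hwz.symm h.hz2w
      · subst hxa
        rcases hTxy.2 with ⟨rfl, _, _⟩ | ⟨rfl, _, ha1⟩ | hh | hh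
        · exact absurd rfl h.hua.symm
        · exact absurd rfl ha1
        · rw [Sym2.eq_iff] at hh
          rcases hh with ⟨haw, _⟩ | ⟨haz, _⟩
          · exact absurd haw.symm h.hwa
          · exact absurd haz.symm h.hz1a
        · rw [Sym2.eq_iff] at hh
          rcases hh with ⟨_, rfl⟩ | ⟨haz, rfl⟩
          · exact Or.inl hz2v
          · exact absurd haz.symm h.hz2a
    rcases hu with huv | ⟨huw, _⟩ | ⟨hua, _⟩
    · exact hvu huv.symm
    · exact h.huw huw
    · exact h.hua hua
  · rw [SimpleGraph.isBridge_iff]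
    intro hre
    have hz1 : z₁ ∈ ({w} : Set V) := by
      refine reachable_closed ?_ hre rfl
      rintro x y (rfl : x = w) hxy
      rw [SimpleGraph.deleteEdges, SimpleGraph.sdiff_adj, SimpleGraph.fromEdgeSet_adj] at hxy
      obtain ⟨hxy, hne⟩ := hxy
      exfalso
      rcases hxy.2 with ⟨rfl, _, _⟩ | ⟨rfl, hw1, _⟩ | hh | hh
      · exact h.huw rfl
      · exact hw1 rfl
      · exact hne ⟨hh, hxy.ne⟩
      · rw [Sym2.eq_iff] at hh
        rcases hh with ⟨hwa, _⟩ | ⟨hwz, _⟩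
        · exact h.hwa.symm hwa.symm
        · exact h.hz2w hwz.symm
    exact h.hz1w hz1
  · rw [SimpleGraph.isBridge_iff]
    intro hre
    have hz2 : z₂ ∈ ({a} : Set V) := by
      refine reachable_closed ?_ hre rfl
      rintro x y (rfl : x = a) hxy
      rw [SimpleGraph.deleteEdges, SimpleGraph.sdiff_adj, SimpleGraph.fromEdgeSet_adj] at hxy
      obtain ⟨hxy, hne⟩ := hxy
      exfalso
      rcases hxy.2 with ⟨rfl, _, _⟩ | ⟨rfl, _, ha1⟩ | hh | hh
      · exact h.hua rfl
      · exact ha1 rfl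
      · rw [Sym2.eq_iff] at hh
        rcases hh with ⟨haw, _⟩ | ⟨haz, _⟩
        · exact h.hwa haw.symm
        · exact h.hz1a haz.symm
      · exact hne ⟨hh, hxy.ne⟩
    exact h.hz2a hz2

lemma treeGraph_isTree [Nonempty V] (h : TreeParams u w a z₁ z₂) :
    (treeGraph u w a z₁ z₂).IsTree :=
  ⟨treeGraph_connected h, treeGraph_isAcyclic h⟩

lemma exists_perm_list (l : List (V × V)) (h1 : (l.map Prod.fst).Nodup)
    (h2 : (l.map Prod.snd).Nodup) : ∃ σ : Equiv.Perm V, ∀ p ∈ l, σ p.1 = p.2 := by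
  induction l with
  | nil => exact ⟨1, by simp⟩
  | cons hd tl ih =>
    rw [List.map_cons, List.nodup_cons] at h1 h2
    obtain ⟨σ', hσ'⟩ := ih h1.2 h2.2
    refine ⟨σ'.trans (Equiv.swap (σ' hd.1) hd.2), ?_⟩
    intro p hp
    rcases List.mem_cons.1 hp with rfl | hp
    · simp [Equiv.swap_apply_left]
    · have hne1 : σ' p.1 ≠ σ' hd.1 := by
        intro hc
        exact h1.1 (by
          have : p.1 = hd.1 := σ'.injective hc
          exact this ▸ List.mem_map_of_mem (f := Prod.fst) hp)
      have hne2 : σ' p.1 ≠ hd.2 := by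
        rw [hσ' p hp]
        intro hc
        exact h2.1 (hc ▸ List.mem_map_of_mem (f := Prod.snd) hp)
      simp only [Equiv.trans_apply]
      rw [Equiv.swap_apply_of_ne_of_ne hne1 hne2, hσ' p hp]

lemma treeGraph_iso {u w a z₁ z₂ u' w' a' z₁' z₂' : V} (σ : Equiv.Perm V)
    (hu : σ u = u') (hw : σ w = w') (ha : σ a = a') (h1 : σ z₁ = z₁') (h2 : σ z₂ = z₂') :
    Nonempty (treeGraph u w a z₁ z₂ ≃g treeGraph u' w' a' z₁' z₂') := by
  subst hu hw ha h1 h2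
  refine ⟨⟨σ, ?_⟩⟩
  intro p q
  show (_ ≠ _ ∧ _) ↔ (_ ≠ _ ∧ _)
  simp [Sym2.eq_iff, σ.injective.eq_iff]

end Tree

section MC
variable {V C : Type*} [Fintype V] [DecidableEq V] [Fintype C] {φ : Sym2 V → C}

lemma colsymm (φ : Sym2 V → C) (x y : V) : φ s(x, y) = φ s(y, x) := by rw [Sym2.eq_swap]

lemma mc_params (hp : IsProperEdgeColoring φ) (hcard : Fintype.card V = Fintype.card C + 1)
    {u w a : V} (huw : u ≠ w) (hua : u ≠ a) (hwa : w ≠ a) :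
    TreeParams u w a (partner hp hcard (φ s(u, a)) w) (partner hp hcard (φ s(u, w)) a) := by
  set z₁ := partner hp hcard (φ s(u, a)) w with hz1
  set z₂ := partner hp hcard (φ s(u, w)) a with hz2
  have hcd : φ s(u, w) ≠ φ s(u, a) := hp u w a huw hua hwa
  have hc1 : φ s(w, z₁) = φ s(u, a) := partner_color hp hcard _ w
  have hc2 : φ s(a, z₂) = φ s(u, w) := partner_color hp hcard _ a
  refine ⟨huw, hua, hwa, ?_, partner_ne hp hcard _ w, ?_, ?_, ?_, partner_ne hp hcard _ a⟩
  · intro h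
    rw [h, colsymm φ w u] at hc1
    exact hcd hc1
  · intro h
    rw [h] at hc1
    exact hp a w u (Ne.symm hwa) (Ne.symm hua) (Ne.symm huw)
      (((colsymm φ a w).trans hc1).trans (colsymm φ u a))
  · intro h
    rw [h, colsymm φ a u] at hc2
    exact hcd hc2.symm
  · intro h
    rw [h] at hc2
    exact hp w a u hwa (Ne.symm huw) (Ne.symm hua)
      (((colsymm φ w a).trans hc2).trans (colsymm φ u w))

lemma mc_injOn (hp : IsProperEdgeColoring φ) (hcard : Fintype.card V = Fintype.card C + 1)
    {u w a : V} (huw : u ≠ w) (hua : u ≠ a) (hwa : w ≠ a) :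
    Set.InjOn φ (treeGraph u w a (partner hp hcard (φ s(u, a)) w)
      (partner hp hcard (φ s(u, w)) a)).edgeSet := by
  have hparams := mc_params hp hcard huw hua hwa
  set z₁ := partner hp hcard (φ s(u, a)) w with hz1
  set z₂ := partner hp hcard (φ s(u, w)) a with hz2
  have hcd : φ s(u, w) ≠ φ s(u, a) := hp u w a huw hua hwa
  have hc1 : φ s(w, z₁) = φ s(u, a) := partner_color hp hcard _ w
  have hc2 : φ s(a, z₂) = φ s(u, w) := partner_color hp hcard _ a
  intro e1 he1 e2 he2 heq
  rw [treeGraph_edge_iff hparams] at he1 he2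
  rcases he1 with ⟨v1, hv1u, hv1w, hv1a, rfl⟩ | rfl | rfl <;>
    rcases he2 with ⟨v2, hv2u, hv2w, hv2a, rfl⟩ | rfl | rfl
  · by_cases hv : v1 = v2
    · rw [hv]
    · exact absurd heq (hp u v1 v2 (Ne.symm hv1u) (Ne.symm hv2u) hv)
  · rw [hc1] at heq
    exact absurd heq (hp u v1 a (Ne.symm hv1u) hua hv1a)
  · rw [hc2] at heq
    exact absurd heq (hp u v1 w (Ne.symm hv1u) huw hv1w)
  · rw [hc1] at heq
    exact absurd heq.symm (hp u v2 a (Ne.symm hv2u) hua hv2a)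
  · rfl
  · rw [hc1, hc2] at heq
    exact absurd heq.symm hcd
  · rw [hc2] at heq
    exact absurd heq.symm (hp u v2 w (Ne.symm hv2u) huw hv2w)
  · rw [hc1, hc2] at heq
    exact absurd heq hcd
  · rfl

end MC

set_option maxHeartbeats 1600000 in
/-- **Lemma 5.** -/
theorem exists_two_disjoint_isomorphic_multicolored_spanning_trees (m : ℕ) (hm : 3 ≤ m)
    (φ : Sym2 (Fin (2 * m)) → Fin (2 * m - 1))
    (hproper : IsProperEdgeColoring φ) :
    ∃ T₁ T₂ : SimpleGraph (Fin (2 * m)),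
      T₁.IsTree ∧ T₂.IsTree ∧
      Set.InjOn φ T₁.edgeSet ∧ Set.InjOn φ T₂.edgeSet ∧
      Disjoint T₁.edgeSet T₂.edgeSet ∧
      Nonempty (T₁ ≃g T₂) := by
  classical
  haveI : Nonempty (Fin (2 * m)) := ⟨⟨0, by omega⟩⟩
  have hcard : Fintype.card (Fin (2 * m)) = Fintype.card (Fin (2 * m - 1)) + 1 := by
    simp only [Fintype.card_fin]; omega
  by_cases hgood : ∃ u x a : Fin (2 * m), u ≠ x ∧ u ≠ a ∧ x ≠ a ∧
      partner hproper hcard (φ s(u, x)) a ≠ partner hproper hcard (φ s(u, a)) x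
  · -- Case 1
    obtain ⟨u, x, a, hux, hua, hxa, hne⟩ := hgood
    set c := φ s(u, x) with hc
    set d := φ s(u, a) with hd
    set b := partner hproper hcard d x with hb
    set z₂ := partner hproper hcard c a with hz2
    set q := partner hproper hcard c b with hq
    have params₁ : TreeParams u x a b z₂ := mc_params hproper hcard hux hua hxa
    have hbx : b ≠ x := partner_ne hproper hcard d x
    have hbu : b ≠ u := params₁.hz1u
    have hba : b ≠ a := params₁.hz1a
    have hPcu : x = partner hproper hcard c u := eq_partner hproper hcard (Ne.symm hux) hc.symm
    have hPdu : partner hproper hcard d u = a :=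
      (eq_partner hproper hcard (Ne.symm hua) hd.symm).symm
    have hφxb : φ s(x, b) = d := partner_color hproper hcard d x
    have hφxu : φ s(x, u) = c := (colsymm φ x u).trans hc.symm
    have hPcx : u = partner hproper hcard c x := eq_partner hproper hcard hux hφxu
    have hqq : partner hproper hcard c q = b := by
      rw [hq]; exact partner_partner hproper hcard c b
    have hqu : q ≠ u := by
      intro h; rw [h] at hqq; exact hbx (hPcu.trans hqq).symm
    have hqx : q ≠ x := by
      intro h; rw [h] at hqq; exact hbu (hPcx.trans hqq).symm
    have hqb : q ≠ b := partner_ne hproper hcard c b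
    have hqa : q ≠ a := by
      intro h; rw [h] at hqq
      exact hne (hz2.symm ▸ hqq.symm ▸ rfl : z₂ = b)
    have params₂ : TreeParams x u b a q := by
      have h := mc_params hproper hcard (Ne.symm hux) hbx.symm (Ne.symm hbu)
      rw [hφxb, hφxu, hPdu] at h
      exact h
    have hinj₂ : Set.InjOn φ (treeGraph x u b a q).edgeSet := by
      have h := mc_injOn hproper hcard (Ne.symm hux) hbx.symm (Ne.symm hbu)
      rw [hφxb, hφxu, hPdu] at h
      exact h
    refine ⟨treeGraph u x a b z₂, treeGraph x u b a q,
      treeGraph_isTree params₁, treeGraph_isTree params₂,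
      mc_injOn hproper hcard hux hua hxa, hinj₂, ?_, ?_⟩
    · rw [Set.disjoint_left]
      intro e he1 he2
      rw [treeGraph_edge_iff params₁] at he1
      rw [treeGraph_edge_iff params₂] at he2
      rcases he1 with ⟨v1, h1u, h1x, h1a, rfl⟩ | rfl | rfl <;>
        rcases he2 with ⟨v2, h2x, h2u, h2b, he⟩ | he | he <;>
        rw [Sym2.eq_iff] at he <;>
        rcases he with ⟨e1, e2⟩ | ⟨e1, e2⟩
      · exact hux e1
      · exact h2u e1.symm
      · exact h1a e2
      · exact hua e1
      · exact hbu e1.symm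
      · exact hqu e1.symm
      · exact h2b e2.symm
      · exact hbx e2
      · exact hux e1.symm
      · exact hxa e1
      · exact hbx e1.symm
      · exact hqx e1.symm
      · exact hxa e1.symm
      · exact params₁.hz2w e2
      · exact hua e1.symm
      · exact params₁.hz2u e2
      · exact hba e1.symm
      · exact hne e2
    · obtain ⟨σ, hσ⟩ := exists_perm_list [(u, x), (x, u), (a, b), (b, a), (z₂, q)]
        (by
          simp [hux, hua, hxa, hbu, hbx, hba, hne, params₁.hz2u, params₁.hz2w,
            params₁.hz2a, Ne.symm hux, Ne.symm hua, Ne.symm hxa, Ne.symm hbu,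
            Ne.symm hbx, Ne.symm hba, Ne.symm hne, Ne.symm params₁.hz2u,
            Ne.symm params₁.hz2w, Ne.symm params₁.hz2a])
        (by
          simp [hux, hua, hxa, hbu, hbx, hba, hqu, hqx, hqb, hqa, Ne.symm hux,
            Ne.symm hua, Ne.symm hxa, Ne.symm hbu, Ne.symm hbx, Ne.symm hba,
            Ne.symm hqu, Ne.symm hqx, Ne.symm hqb, Ne.symm hqa])
      exact treeGraph_iso σ (hσ (u, x) (by simp)) (hσ (x, u) (by simp))
        (hσ (a, b) (by simp)) (hσ (b, a) (by simp)) (hσ (z₂, q) (by simp))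
  · -- Case 2
    push_neg at hgood
    set u : Fin (2 * m) := ⟨0, by omega⟩ with hudef
    set x : Fin (2 * m) := ⟨1, by omega⟩ with hxdef
    set a : Fin (2 * m) := ⟨2, by omega⟩ with hadef
    have hux : u ≠ x := by
      rw [hudef, hxdef]; intro hh; rw [Fin.mk.injEq] at hh; omega
    have hua : u ≠ a := by
      rw [hudef, hadef]; intro hh; rw [Fin.mk.injEq] at hh; omega
    have hxa : x ≠ a := by
      rw [hxdef, hadef]; intro hh; rw [Fin.mk.injEq] at hh; omega
    set c := φ s(u, x) with hc
    set d := φ s(u, a) with hd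
    set y := partner hproper hcard d x with hy
    have hyPca : partner hproper hcard c a = y := hgood u x a hux hua hxa
    have params₁ : TreeParams u x a y y := by
      have h := mc_params hproper hcard hux hua hxa
      rw [hyPca] at h
      exact h
    obtain ⟨B₀, hB0⟩ : ∃ t, t = partner hproper hcard (φ s(u, y)) x := ⟨_, rfl⟩
    have hBex : ∃ B : Fin (2 * m), B ∉ ({u, x, a, y, B₀} : Finset (Fin (2 * m))) := by
      by_contra hcon
      push_neg at hcon
      have hsub : (Finset.univ : Finset (Fin (2 * m))) ⊆ {u, x, a, y, B₀} :=
        fun z _ => hcon z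
      have hle := Finset.card_le_card hsub
      have h5 : ({u, x, a, y, B₀} : Finset (Fin (2 * m))).card ≤ 5 := by
        have h1 := Finset.card_insert_le u ({x, a, y, B₀} : Finset (Fin (2 * m)))
        have h2 := Finset.card_insert_le x ({a, y, B₀} : Finset (Fin (2 * m)))
        have h3 := Finset.card_insert_le a ({y, B₀} : Finset (Fin (2 * m)))
        have h4 := Finset.card_insert_le y ({B₀} : Finset (Fin (2 * m)))
        simp only [Finset.card_singleton] at *
        omega
      rw [Finset.card_univ, Fintype.card_fin] at hle
      omega
    obtain ⟨B, hB⟩ := hBex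
    simp only [Finset.mem_insert, Finset.mem_singleton, not_or] at hB
    obtain ⟨hBu, hBx, hBa, hBy, hBB0⟩ := hB
    have hxy : x ≠ y := Ne.symm params₁.hz1w
    have hxB : x ≠ B := Ne.symm hBx
    have hyB : y ≠ B := Ne.symm hBy
    obtain ⟨f, hf⟩ : ∃ t, t = φ s(x, B) := ⟨_, rfl⟩
    obtain ⟨p, hp2⟩ : ∃ t, t = partner hproper hcard f y := ⟨_, rfl⟩
    obtain ⟨q, hq2⟩ : ∃ t, t = partner hproper hcard d B := ⟨_, rfl⟩
    have hφxy : φ s(x, y) = d := partner_color hproper hcard d x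
    have hqEqp : q = p := by
      rw [hq2, hp2, hf, ← hφxy]
      exact hgood x y B hxy hxB hyB
    have params₂ : TreeParams x y B p q := by
      have h := mc_params hproper hcard hxy hxB hyB
      rw [hφxy, ← hf, ← hp2, ← hq2] at h
      exact h
    have hinj₂ : Set.InjOn φ (treeGraph x y B p q).edgeSet := by
      have h := mc_injOn hproper hcard hxy hxB hyB
      rw [hφxy, ← hf, ← hp2, ← hq2] at h
      exact h
    have hinj₁ : Set.InjOn φ (treeGraph u x a y y).edgeSet := by
      have h := mc_injOn hproper hcard hux hua hxa
      rw [hyPca] at h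
      exact h
    have hφay : φ s(a, y) = c := by rw [← hyPca]; exact partner_color hproper hcard c a
    have hPdu : partner hproper hcard d u = a :=
      (eq_partner hproper hcard (Ne.symm hua) hd.symm).symm
    have hφxu : φ s(x, u) = c := (colsymm φ x u).trans hc.symm
    have hPcx : u = partner hproper hcard c x := eq_partner hproper hcard hux hφxu
    have hBPf : B = partner hproper hcard f x := eq_partner hproper hcard hBx hf.symm
    have hpu : p ≠ u := by
      intro h
      apply hBB0
      have hcol : φ s(y, p) = f := by rw [hp2]; exact partner_color hproper hcard f y
      rw [h] at hcol
      have feq : φ s(u, y) = f := (colsymm φ u y).trans hcol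
      rw [← feq, ← hB0] at hBPf
      exact hBPf
    have hqu : q ≠ u := by
      intro h
      have hqq : partner hproper hcard d q = B := by
        rw [hq2]; exact partner_partner hproper hcard d B
      rw [h, hPdu] at hqq
      exact hBa hqq.symm
    have hpa : p ≠ a := by
      intro h
      have hcol : φ s(y, p) = f := by rw [hp2]; exact partner_color hproper hcard f y
      rw [h] at hcol
      have feq : f = c := hcol.symm.trans ((colsymm φ y a).trans hφay)
      rw [feq, ← hPcx] at hBPf
      exact hBu hBPf
    refine ⟨treeGraph u x a y y, treeGraph x y B p q,
      treeGraph_isTree params₁, treeGraph_isTree params₂, hinj₁, hinj₂, ?_, ?_⟩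
    · rw [Set.disjoint_left]
      intro e he1 he2
      rw [treeGraph_edge_iff params₁] at he1
      rw [treeGraph_edge_iff params₂] at he2
      rcases he1 with ⟨v1, h1u, h1x, h1a, rfl⟩ | rfl | rfl <;>
        rcases he2 with ⟨v2, h2x, h2y, h2B, he⟩ | he | he <;>
        rw [Sym2.eq_iff] at he <;>
        rcases he with ⟨e1, e2⟩ | ⟨e1, e2⟩
      · exact hux e1
      · exact h1x e2
      · exact params₁.hz1u e1.symm
      · exact hpu e1.symm
      · exact hBu e1.symm
      · exact hqu e1.symm
      · exact h2y e2.symm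
      · exact params₁.hz1w e2
      · exact params₁.hz1w e1.symm
      · exact params₂.hz1u e1.symm
      · exact hBx e1.symm
      · exact hBy e2.symm
      · exact hxa e1.symm
      · exact params₁.hz1w e2
      · exact params₁.hz1a e1.symm
      · exact hpa e1.symm
      · exact hBa e1.symm
      · exact hBy e2.symm
    · obtain ⟨σ, hσ⟩ := exists_perm_list [(u, x), (x, y), (a, B), (y, p)]
        (by
          simp [hux, hua, hxa, params₁.hz1u, params₁.hz1w, params₁.hz1a,
            Ne.symm hux, Ne.symm hua, Ne.symm hxa, Ne.symm params₁.hz1u,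
            Ne.symm params₁.hz1w, Ne.symm params₁.hz1a])
        (by
          simp [hxy, hxB, hyB, params₂.hz1u, params₂.hz1w, params₂.hz1a,
            Ne.symm hxy, Ne.symm hxB, Ne.symm hyB, Ne.symm params₂.hz1u,
            Ne.symm params₂.hz1w, Ne.symm params₂.hz1a])
      exact treeGraph_iso σ (hσ (u, x) (by simp)) (hσ (x, y) (by simp))
        (hσ (a, B) (by simp)) (hσ (y, p) (by simp))
        ((hσ (y, p) (by simp)).trans hqEqp.symm)
end

section
/- Let μ be a proper (2m−1)-edge-coloring of the complete graph K_{2m} such that every two distinct colors induce a C4-factor. Let a and c be distinct colors, let x and y be distinct vertices with μ(xy) = a, and let x′ and y′ be the vertices joined to x and to y, respectively, by an edge of color c. Then x, y, x′, y′ are four distinct vertices and μ(x′y′) = a. -/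
private lemma walk_closed {V : Type*} {G : SimpleGraph V} {S : Set V}
    (hS : ∀ u ∈ S, ∀ v, G.Adj u v → v ∈ S) :
    ∀ {u v : V}, G.Walk u v → u ∈ S → v ∈ S := by
  intro u v w
  induction w with
  | nil => exact id
  | cons h p ih => intro hu; exact ih (hS _ hu _ h)

private lemma supp_subset {V : Type*} {G : SimpleGraph V} {S : Set V}
    (hS : ∀ u ∈ S, ∀ v, G.Adj u v → v ∈ S) {x : V} (hx : x ∈ S) :
    (G.connectedComponentMk x).supp ⊆ S := by
  intro v hv
  rw [SimpleGraph.ConnectedComponent.mem_supp_iff] at hv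
  obtain ⟨w⟩ := (SimpleGraph.ConnectedComponent.eq.mp hv).symm
  exact walk_closed hS w hx

/-- If every two distinct colors of a proper `(2m-1)`-edge-coloring of `K_{2m}` induce a
`C4`-factor, `a ≠ c` are colors, `x ≠ y` are vertices with `μ(xy) = a`, and `x'`, `y'`
are the vertices joined to `x` and to `y` by an edge of color `c`, then `x, y, x', y'`
are four distinct vertices and `μ(x'y') = a`. -/
theorem C4Factor_translation_preserves_color (m : ℕ)
    (μ : Sym2 (Fin (2 * m)) → Fin (2 * m - 1))
    (hproper : IsProperEdgeColoring μ)
    (hC4 : ∀ a b : Fin (2 * m - 1), a ≠ b → IsC4Factor (colorPairGraph μ a b))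
    (a c : Fin (2 * m - 1)) (hac : a ≠ c)
    (x y x' y' : Fin (2 * m)) (hxy : x ≠ y) (ha : μ s(x, y) = a)
    (hx'ne : x' ≠ x) (hx'c : μ s(x, x') = c)
    (hy'ne : y' ≠ y) (hy'c : μ s(y, y') = c) :
    (x ≠ x' ∧ x ≠ y' ∧ y ≠ x' ∧ y ≠ y' ∧ x' ≠ y') ∧ μ s(x', y') = a := by
  set G := colorPairGraph μ a c with hG
  obtain ⟨hdeg, hsupp⟩ := hC4 a c hac
  -- basic distinctness
  have hxy' : x ≠ y' := by
    rintro rfl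
    rw [Sym2.eq_swap] at hy'c
    exact hac (ha ▸ hy'c.symm ▸ rfl)
  have hyx' : y ≠ x' := by
    rintro rfl
    exact hac (ha ▸ hx'c)
  -- adjacencies in G
  have axy : G.Adj x y := ⟨hxy, Or.inl ha⟩
  have axx' : G.Adj x x' := ⟨hx'ne.symm, Or.inr hx'c⟩
  have ayy' : G.Adj y y' := ⟨hy'ne.symm, Or.inr hy'c⟩
  -- neighbor set determination
  have nbhd : ∀ u p q : Fin (2 * m), p ≠ q → G.Adj u p → G.Adj u q →
      G.neighborSet u = {p, q} := by
    intro u p q hpq hp hq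
    refine (Set.eq_of_subset_of_ncard_le ?_ ?_ (Set.toFinite _)).symm
    · intro v hv
      rcases hv with rfl | hv
      · exact hp
      · rw [Set.mem_singleton_iff] at hv; subst hv; exact hq
    · rw [hdeg u, Set.ncard_pair hpq]
  have nx : G.neighborSet x = {y, x'} := nbhd x y x' hyx' axy axx'
  have ny : G.neighborSet y = {x, y'} := nbhd y x y' hxy' axy.symm ayy'
  -- x' ≠ y'
  have hx'y' : x' ≠ y' := by
    rintro rfl
    have nx' : G.neighborSet x' = {x, y} := nbhd x' x y hxy axx'.symm ayy'.symm
    have hclosed : ∀ u ∈ ({x, y, x'} : Set (Fin (2 * m))), ∀ v, G.Adj u v →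
        v ∈ ({x, y, x'} : Set (Fin (2 * m))) := by
      intro u hu v hv
      rcases hu with rfl | rfl | rfl
      · have : v ∈ G.neighborSet u := hv
        rw [nx] at this
        rcases this with rfl | h
        · right; left; rfl
        · rw [Set.mem_singleton_iff] at h; subst h; right; right; rfl
      · have : v ∈ G.neighborSet u := hv
        rw [ny] at this
        rcases this with rfl | h
        · left; rfl
        · rw [Set.mem_singleton_iff] at h; subst h; right; right; rfl
      · have : v ∈ G.neighborSet u := hv
        rw [nx'] at this
        rcases this with rfl | h
        · left; rfl
        · rw [Set.mem_singleton_iff] at h; subst h; right; left; rfl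
    have hsub := supp_subset hclosed (show x ∈ ({x, y, x'} : Set (Fin (2 * m))) from
      Or.inl rfl)
    have h4 := hsupp (G.connectedComponentMk x)
    have hle := Set.ncard_le_ncard hsub (Set.toFinite _)
    have h3 : ({x, y, x'} : Set (Fin (2 * m))).ncard ≤ 3 :=
      (Set.ncard_insert_le _ _).trans (by
        have := Set.ncard_insert_le y ({x'} : Set (Fin (2 * m)))
        simp [Set.ncard_singleton] at this ⊢
        omega)
    omega
  -- the component of x is exactly {x, y, x', y'}
  have hx'mem : x' ∈ (G.connectedComponentMk x).supp := by
    rw [SimpleGraph.ConnectedComponent.mem_supp_iff]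
    exact SimpleGraph.ConnectedComponent.eq.mpr axx'.symm.reachable
  have hymem : y ∈ (G.connectedComponentMk x).supp := by
    rw [SimpleGraph.ConnectedComponent.mem_supp_iff]
    exact SimpleGraph.ConnectedComponent.eq.mpr axy.symm.reachable
  have hy'mem : y' ∈ (G.connectedComponentMk x).supp := by
    rw [SimpleGraph.ConnectedComponent.mem_supp_iff]
    exact SimpleGraph.ConnectedComponent.eq.mpr (ayy'.symm.reachable.trans axy.symm.reachable)
  have hxmem : x ∈ (G.connectedComponentMk x).supp := by
    rw [SimpleGraph.ConnectedComponent.mem_supp_iff]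
  have hsubset : ({x, y, x', y'} : Set (Fin (2 * m))) ⊆ (G.connectedComponentMk x).supp := by
    intro v hv
    rcases hv with rfl | rfl | rfl | hv
    · exact hxmem
    · exact hymem
    · exact hx'mem
    · rw [Set.mem_singleton_iff] at hv; subst hv; exact hy'mem
  have hcard4 : ({x, y, x', y'} : Set (Fin (2 * m))).ncard = 4 := by
    rw [Set.ncard_insert_of_notMem (by simp [hxy, hx'ne.symm, hxy']),
      Set.ncard_insert_of_notMem (by simp [hyx', hy'ne.symm]),
      Set.ncard_insert_of_notMem (by simp [hx'y']), Set.ncard_singleton]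
  have hsuppeq : ({x, y, x', y'} : Set (Fin (2 * m))) = (G.connectedComponentMk x).supp :=
    Set.eq_of_subset_of_ncard_le hsubset
      (by rw [hsupp (G.connectedComponentMk x), hcard4]) (Set.toFinite _)
  -- second neighbor of x'
  have hw : ∃ w ∈ G.neighborSet x', w ≠ x := by
    by_contra h
    push_neg at h
    have hsub : G.neighborSet x' ⊆ {x} := fun v hv => h v hv
    have := Set.ncard_le_ncard hsub (Set.finite_singleton x)
    rw [hdeg x', Set.ncard_singleton] at this
    omega
  obtain ⟨w, hwadj, hwx⟩ := hw
  have hwadj' : G.Adj x' w := hwadj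
  have hwx' : w ≠ x' := hwadj'.ne' 
  have hwmem : w ∈ (G.connectedComponentMk x).supp := by
    rw [SimpleGraph.ConnectedComponent.mem_supp_iff]
    exact SimpleGraph.ConnectedComponent.eq.mpr
      (hwadj'.symm.reachable.trans axx'.symm.reachable)
  rw [← hsuppeq] at hwmem
  have hwy : w ≠ y := by
    intro hwyeq
    rcases hwadj'.2 with h | h
    · have h1 : μ s(y, x) = a := by rw [Sym2.eq_swap]; exact ha
      have h2 : μ s(y, x') = a := by rw [Sym2.eq_swap, ← hwyeq]; exact h
      exact hproper y x x' hxy.symm hyx' hx'ne.symm (h1.trans h2.symm)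
    · have h1 : μ s(y, x') = c := by rw [Sym2.eq_swap, ← hwyeq]; exact h
      exact hproper y x' y' hyx' hy'ne.symm hx'y' (h1.trans hy'c.symm)
  have hwy' : w = y' := by
    rcases hwmem with rfl | rfl | rfl | hv
    · exact absurd rfl hwx
    · exact absurd rfl hwy
    · exact absurd rfl hwx'
    · rw [Set.mem_singleton_iff] at hv; exact hv
  refine ⟨⟨hx'ne.symm, hxy', hyx', hy'ne.symm, hx'y'⟩, ?_⟩
  rcases hwadj'.2 with h | h
  · rw [← hwy']; exact h
  · exfalso
    have h1 : μ s(x', x) = c := by rw [Sym2.eq_swap]; exact hx'c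
    exact hproper x' x w hx'ne hwx'.symm hwx.symm (h1.trans h.symm)
end

section
/- Let φ be a proper (2m−1)-edge-coloring of the complete graph K_{2m} with m ≥ 2, let u be a vertex, and let x, y be two distinct vertices different from u, with c_1 = φ(ux) and c_2 = φ(uy). Let T be the spanning subgraph whose edges are: all edges incident to u except ux and uy, together with the edge of color c_2 at x and the edge of color c_1 at y. Then T is a multicolored spanning tree of K_{2m}. -/
/-- `modifiedStar u x y e₁ e₂` is the graph `S_u[x, y; c₁, c₂]`: it consists of all edges
incident to `u` except `ux` and `uy`, together with the two edges `e₁` and `e₂`. -/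
def modifiedStar {V : Type*} (u x y : V) (e₁ e₂ : Sym2 V) : SimpleGraph V :=
  SimpleGraph.fromEdgeSet
    ({e | ∃ v, v ≠ u ∧ v ≠ x ∧ v ≠ y ∧ e = s(u, v)} ∪ {e₁, e₂})

open SimpleGraph

lemma first_edge_mem {V : Type*} {G : SimpleGraph V} :
    ∀ {a b : V} (p : G.Walk a b), ¬ p.Nil → s(a, p.getVert 1) ∈ p.edges := by
  intro a b p hp
  cases p with
  | nil => simp at hp
  | cons h q => simp [Walk.getVert_cons_succ]

lemma leaf_not_mem_cycle_support {V : Type*} [DecidableEq V] {G : SimpleGraph V} {v a w : V}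
    (c : G.Walk w w) (hc : c.IsCycle)
    (h : ∀ b, G.Adj v b → b ∈ c.support → b = a) : v ∉ c.support := by
  intro hv
  set c' := c.rotate v hv with hc'def
  have hc' : c'.IsCycle := hc.rotate hv
  have hnn : ¬ c'.Nil := hc'.not_nil
  have h1 : G.Adj v (c'.getVert 1) := c'.adj_snd hnn
  have hkey := (Walk.cons_isCycle_iff c'.tail (c'.adj_snd hnn)).mp
    (by rw [Walk.cons_tail_eq c' hnn]; exact hc')
  have hedges : c'.edges = s(v, c'.getVert 1) :: c'.tail.edges := by
    conv_lhs => rw [← Walk.cons_tail_eq c' hnn]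
    rw [Walk.edges_cons]
  have hperm : ∀ e, e ∈ c'.edges → e ∈ c.edges := fun e he =>
    ((Walk.rotate_edges c v hv).perm.mem_iff).mp he
  set t := c'.tail with htdef
  have htnn : ¬ t.reverse.Nil := Walk.not_nil_of_ne h1.ne
  have h2 : G.Adj v (t.reverse.getVert 1) := t.reverse.adj_snd htnn
  have hmem2 : s(v, t.reverse.getVert 1) ∈ t.edges := by
    have := first_edge_mem t.reverse htnn
    rwa [Walk.edges_reverse, List.mem_reverse] at this
  have m1 : c'.getVert 1 ∈ c.support :=
    c.snd_mem_support_of_mem_edges (hperm _ (hedges ▸ List.mem_cons_self))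
  have m2 : t.reverse.getVert 1 ∈ c.support :=
    c.snd_mem_support_of_mem_edges (hperm _ (hedges ▸ List.mem_cons_of_mem _ hmem2))
  have e1 := h _ h1 m1
  have e2 := h _ h2 m2
  have heq : s(v, c'.getVert 1) = s(v, t.reverse.getVert 1) := by rw [e2, e1]
  exact hkey.2 (heq.symm ▸ hmem2)

/-- If `φ` is a proper `(2m-1)`-edge-coloring of `K_{2m}` (`m ≥ 2`), `u, x, y` are
distinct vertices, `c₁ = φ(ux)`, `c₂ = φ(uy)`, and `x'` (resp. `y'`) is the other
endpoint of the edge of color `c₂` at `x` (resp. of color `c₁` at `y`), then the graph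
`S_u[x, y; c₁, c₂]` — all edges at `u` except `ux`, `uy`, plus `xx'` and `yy'` — is a
multicolored spanning tree of `K_{2m}`. -/
theorem modifiedStar_isTree_multicolored (m : ℕ) (hm : 2 ≤ m)
    (φ : Sym2 (Fin (2 * m)) → Fin (2 * m - 1))
    (hproper : IsProperEdgeColoring φ)
    (u x y : Fin (2 * m)) (hux : u ≠ x) (huy : u ≠ y) (hxy : x ≠ y)
    (c₁ c₂ : Fin (2 * m - 1)) (hc₁ : φ s(u, x) = c₁) (hc₂ : φ s(u, y) = c₂)
    (x' y' : Fin (2 * m))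
    (hx' : x' ≠ x) (hx'c : φ s(x, x') = c₂)
    (hy' : y' ≠ y) (hy'c : φ s(y, y') = c₁) :
    (modifiedStar u x y s(x, x') s(y, y')).IsTree ∧
    Set.InjOn φ (modifiedStar u x y s(x, x') s(y, y')).edgeSet := by

  have sw : ∀ a b : Fin (2 * m), φ s(a, b) = φ s(b, a) := fun a b => by rw [Sym2.eq_swap]
  have hc12 : c₁ ≠ c₂ := by
    rw [← hc₁, ← hc₂]; exact hproper u x y hux huy hxy
  have hx'u : x' ≠ u := by
    intro h
    exact hc12 (by rw [← hc₁, ← hx'c, h]; exact sw u x)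
  have hy'u : y' ≠ u := by
    intro h
    exact hc12 (by rw [← hy'c, ← hc₂, h]; exact sw y u)
  have hx'y : x' ≠ y := by
    intro h
    refine hproper y x u hxy.symm huy.symm hux.symm ?_
    have h1 : φ s(y, x) = c₂ := (sw y x).trans (h ▸ hx'c)
    rw [h1, ← hc₂]; exact sw u y
  have hy'x : y' ≠ x := by
    intro h
    refine hproper x y u hxy hux.symm huy.symm ?_
    have h1 : φ s(x, y) = c₁ := (sw x y).trans (h ▸ hy'c)
    rw [h1, ← hc₁]; exact sw u x
  have hAdj : ∀ a b : Fin (2 * m), (modifiedStar u x y s(x, x') s(y, y')).Adj a b ↔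
      ((∃ v, v ≠ u ∧ v ≠ x ∧ v ≠ y ∧ s(a, b) = s(u, v)) ∨
        s(a, b) = s(x, x') ∨ s(a, b) = s(y, y')) ∧ a ≠ b := by
    intro a b
    simp only [modifiedStar, SimpleGraph.fromEdgeSet_adj, Set.mem_union, Set.mem_setOf_eq,
      Set.mem_insert_iff, Set.mem_singleton_iff]
  have hstar : ∀ v : Fin (2 * m), v ≠ u → v ≠ x → v ≠ y →
      (modifiedStar u x y s(x, x') s(y, y')).Adj u v :=
    fun v h1 h2 h3 => (hAdj u v).2 ⟨Or.inl ⟨v, h1, h2, h3, rfl⟩, Ne.symm h1⟩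
  have hax : (modifiedStar u x y s(x, x') s(y, y')).Adj x x' :=
    (hAdj x x').2 ⟨Or.inr (Or.inl rfl), Ne.symm hx'⟩
  have hay : (modifiedStar u x y s(x, x') s(y, y')).Adj y y' :=
    (hAdj y y').2 ⟨Or.inr (Or.inr rfl), Ne.symm hy'⟩
  have hreach : ∀ v, (modifiedStar u x y s(x, x') s(y, y')).Reachable u v := by
    intro v
    by_cases hvu : v = u
    · subst hvu; exact SimpleGraph.Reachable.refl v
    by_cases hvx : v = x
    · subst hvx
      exact ((hstar x' hx'u hx' hx'y).reachable).trans (hax.symm.reachable)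
    by_cases hvy : v = y
    · subst hvy
      exact ((hstar y' hy'u hy'x hy').reachable).trans (hay.symm.reachable)
    · exact (hstar v hvu hvx hvy).reachable
  have hconn : (modifiedStar u x y s(x, x') s(y, y')).Connected := by
    haveI : Nonempty (Fin (2 * m)) := ⟨u⟩
    exact ⟨fun a b => (hreach a).symm.trans (hreach b)⟩
  have hnbrx : ∀ b, (modifiedStar u x y s(x, x') s(y, y')).Adj x b → b = x' := by
    intro b hb
    obtain ⟨hcase, hne⟩ := (hAdj x b).1 hb
    rcases hcase with ⟨v, h1, h2, h3, heq⟩ | heq | heq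
    · rcases Sym2.eq_iff.1 heq with ⟨h4, h5⟩ | ⟨h4, h5⟩
      · exact absurd h4 hux.symm
      · exact absurd h4.symm h2
    · rcases Sym2.eq_iff.1 heq with ⟨h4, h5⟩ | ⟨h4, h5⟩
      · exact h5
      · exact absurd h4.symm hx'
    · rcases Sym2.eq_iff.1 heq with ⟨h4, h5⟩ | ⟨h4, h5⟩
      · exact absurd h4 hxy
      · exact absurd h4.symm hy'x
  have hnbry : ∀ b, (modifiedStar u x y s(x, x') s(y, y')).Adj y b → b = y' := by
    intro b hb
    obtain ⟨hcase, hne⟩ := (hAdj y b).1 hb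
    rcases hcase with ⟨v, h1, h2, h3, heq⟩ | heq | heq
    · rcases Sym2.eq_iff.1 heq with ⟨h4, h5⟩ | ⟨h4, h5⟩
      · exact absurd h4 huy.symm
      · exact absurd h4.symm h3
    · rcases Sym2.eq_iff.1 heq with ⟨h4, h5⟩ | ⟨h4, h5⟩
      · exact absurd h4 hxy.symm
      · exact absurd h4.symm hx'y
    · rcases Sym2.eq_iff.1 heq with ⟨h4, h5⟩ | ⟨h4, h5⟩
      · exact h5
      · exact absurd h4.symm hy'
  have hacyc : (modifiedStar u x y s(x, x') s(y, y')).IsAcyclic := by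
    intro w c hc
    have hxs : x ∉ c.support :=
      leaf_not_mem_cycle_support c hc (fun b hb _ => hnbrx b hb)
    have hys : y ∉ c.support :=
      leaf_not_mem_cycle_support c hc (fun b hb _ => hnbry b hb)
    obtain ⟨z, hzs, hzu⟩ : ∃ z, z ∈ c.support ∧ z ≠ u := by
      by_cases hwu : w = u
      · subst hwu
        refine ⟨c.getVert 1, ?_, ?_⟩
        · exact SimpleGraph.Walk.mem_support_iff_exists_getVert.2
            ⟨1, rfl, by have := hc.three_le_length; omega⟩
        · exact (c.adj_snd hc.not_nil).ne'
      · exact ⟨w, c.start_mem_support, hwu⟩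
    have hzx : z ≠ x := fun h => hxs (h ▸ hzs)
    have hzy : z ≠ y := fun h => hys (h ▸ hzs)
    refine leaf_not_mem_cycle_support (a := u) c hc ?_ hzs
    intro b hb hbs
    obtain ⟨hcase, hne⟩ := (hAdj z b).1 hb
    rcases hcase with ⟨v, h1, h2, h3, heq⟩ | heq | heq
    · rcases Sym2.eq_iff.1 heq with ⟨h4, h5⟩ | ⟨h4, h5⟩
      · exact absurd h4 hzu
      · exact h5
    · rcases Sym2.eq_iff.1 heq with ⟨h4, h5⟩ | ⟨h4, h5⟩
      · exact absurd h4 hzx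
      · exact absurd (h5 ▸ hbs) hxs
    · rcases Sym2.eq_iff.1 heq with ⟨h4, h5⟩ | ⟨h4, h5⟩
      · exact absurd h4 hzy
      · exact absurd (h5 ▸ hbs) hys
  refine ⟨⟨hconn, hacyc⟩, ?_⟩
  have hedge : ∀ e ∈ (modifiedStar u x y s(x, x') s(y, y')).edgeSet,
      (∃ v, v ≠ u ∧ v ≠ x ∧ v ≠ y ∧ e = s(u, v)) ∨ e = s(x, x') ∨ e = s(y, y') := by
    intro e he
    rw [modifiedStar, SimpleGraph.edgeSet_fromEdgeSet] at he
    have h1 := he.1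
    simp only [Set.mem_union, Set.mem_setOf_eq, Set.mem_insert_iff,
      Set.mem_singleton_iff] at h1
    tauto
  have hφstar : ∀ v : Fin (2 * m), v ≠ u → v ≠ x → v ≠ y →
      φ s(u, v) ≠ c₁ ∧ φ s(u, v) ≠ c₂ := fun v h1 h2 h3 =>
    ⟨by rw [← hc₁]; exact hproper u v x (Ne.symm h1) hux h2,
     by rw [← hc₂]; exact hproper u v y (Ne.symm h1) huy h3⟩
  intro e he f hf hef
  rcases hedge e he with ⟨v, hv1, hv2, hv3, rfl⟩ | rfl | rfl
  · rcases hedge f hf with ⟨w, hw1, hw2, hw3, rfl⟩ | rfl | rfl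
    · rcases eq_or_ne v w with rfl | hvw
      · rfl
      · exact absurd hef (hproper u v w (Ne.symm hv1) (Ne.symm hw1) hvw)
    · exact absurd (hef.trans hx'c) (hφstar v hv1 hv2 hv3).2
    · exact absurd (hef.trans hy'c) (hφstar v hv1 hv2 hv3).1
  · rcases hedge f hf with ⟨w, hw1, hw2, hw3, rfl⟩ | rfl | rfl
    · exact absurd (hef.symm.trans hx'c) (hφstar w hw1 hw2 hw3).2
    · rfl
    · exact absurd (by rw [← hx'c, ← hy'c]; exact hef) (Ne.symm hc12)
  · rcases hedge f hf with ⟨w, hw1, hw2, hw3, rfl⟩ | rfl | rfl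
    · exact absurd (hef.symm.trans hy'c) (hφstar w hw1 hw2 hw3).1
    · exact absurd (by rw [← hy'c, ← hx'c]; exact hef) hc12
    · rfl
end

section
/- Let φ be a proper (2m−1)-edge-coloring of the complete graph K_{2m} with m ≥ 3, and suppose there are four distinct vertices x_1, x_2, x_3, x_4 and colors a, b, c with φ(x_1 x_4) = φ(x_2 x_3) = a, φ(x_1 x_2) = b, φ(x_3 x_4) = c, and b ≠ c. Let T_1 be the spanning subgraph with edges: all edges incident to x_1 except x_1 x_2 and x_1 x_4, together with the edge x_2 x_3 and the edge of color b at x_4; let T_2 be the spanning subgraph with edges: all edges incident to x_2 except x_2 x_1 and x_2 x_3, together with the edge x_1 x_4 and the edge of color b at x_3. Then T_1 and T_2 are edge-disjoint multicolored spanning trees of K_{2m} that are isomorphic as graphs. -/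
lemma modifiedStar_adj {V : Type*} (u x y : V) (e₁ e₂ : Sym2 V) (w z : V) :
    (modifiedStar u x y e₁ e₂).Adj w z ↔
      ((∃ v, v ≠ u ∧ v ≠ x ∧ v ≠ y ∧ s(w, z) = s(u, v)) ∨ s(w, z) = e₁ ∨ s(w, z) = e₂)
        ∧ w ≠ z := by
  rw [modifiedStar, SimpleGraph.fromEdgeSet_adj]
  simp only [Set.mem_union, Set.mem_setOf_eq, Set.mem_insert_iff, Set.mem_singleton_iff]

lemma reach_invariant {V : Type*} {H : SimpleGraph V} {S : Set V}
    (hS : ∀ ⦃a b : V⦄, H.Adj a b → a ∈ S → b ∈ S) :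
    ∀ {a b : V}, H.Reachable a b → a ∈ S → b ∈ S := by
  intro a b h ha
  obtain ⟨w⟩ := h
  induction w with
  | nil => exact ha
  | cons h p ih => exact ih (hS h ha)

lemma modifiedStar_connected {V : Type*} (u x y p q : V)
    (hxu : x ≠ u) (hyu : y ≠ u) (hxy : x ≠ y)
    (hpu : p ≠ u) (hpx : p ≠ x) (hpy : p ≠ y)
    (hqu : q ≠ u) (hqx : q ≠ x) (hqy : q ≠ y) :
    (modifiedStar u x y s(x, p) s(y, q)).Connected := by
  set G := modifiedStar u x y s(x, p) s(y, q) with hG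
  have hstar : ∀ v : V, v ≠ u → v ≠ x → v ≠ y → G.Adj u v := by
    intro v h1 h2 h3
    rw [hG, modifiedStar_adj]
    exact ⟨Or.inl ⟨v, h1, h2, h3, rfl⟩, fun h => h1 h.symm⟩
  have hxp : G.Adj x p := by
    rw [hG, modifiedStar_adj]
    exact ⟨Or.inr (Or.inl rfl), fun h => hpx h.symm⟩
  have hyq : G.Adj y q := by
    rw [hG, modifiedStar_adj]
    exact ⟨Or.inr (Or.inr rfl), fun h => hqy h.symm⟩
  have hreach : ∀ v : V, G.Reachable u v := by
    intro v
    by_cases h1 : v = u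
    · subst h1; exact SimpleGraph.Reachable.refl _
    by_cases h2 : v = x
    · subst h2
      exact ((hstar p hpu hpx hpy).reachable).trans (hxp.symm.reachable)
    by_cases h3 : v = y
    · subst h3
      exact ((hstar q hqu hqx hqy).reachable).trans (hyq.symm.reachable)
    · exact (hstar v h1 h2 h3).reachable
  haveI : Nonempty V := ⟨u⟩
  exact ⟨fun v w => (hreach v).symm.trans (hreach w)⟩

lemma modifiedStar_isAcyclic {V : Type*} (u x y p q : V)
    (hxu : x ≠ u) (hyu : y ≠ u) (hxy : x ≠ y)
    (hpu : p ≠ u) (hpx : p ≠ x) (hpy : p ≠ y)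
    (hqu : q ≠ u) (hqx : q ≠ x) (hqy : q ≠ y) (hpq : p ≠ q) :
    (modifiedStar u x y s(x, p) s(y, q)).IsAcyclic := by
  classical
  have hux : u ≠ x := hxu.symm
  have huy : u ≠ y := hyu.symm
  have hyx : y ≠ x := hxy.symm
  have hup : u ≠ p := hpu.symm
  have hxp2 : x ≠ p := hpx.symm
  have hyp2 : y ≠ p := hpy.symm
  have huq : u ≠ q := hqu.symm
  have hxq2 : x ≠ q := hqx.symm
  have hyq2 : y ≠ q := hqy.symm
  have hqp : q ≠ p := hpq.symm
  set G := modifiedStar u x y s(x, p) s(y, q) with hG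
  have hdel : ∀ (e : Sym2 V) (a b : V), (G \ SimpleGraph.fromEdgeSet {e}).Adj a b →
      ((∃ v, v ≠ u ∧ v ≠ x ∧ v ≠ y ∧ s(a, b) = s(u, v)) ∨ s(a, b) = s(x, p) ∨ s(a, b) = s(y, q))
        ∧ a ≠ b ∧ s(a, b) ≠ e := by
    intro e a b hab
    rw [SimpleGraph.sdiff_adj, SimpleGraph.fromEdgeSet_adj] at hab
    obtain ⟨hGab, hne⟩ := hab
    rw [hG, modifiedStar_adj] at hGab
    exact ⟨hGab.1, hGab.2, fun h => hne ⟨h, hGab.2⟩⟩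
  have key1 : ∀ v : V, v ≠ u → v ≠ x → v ≠ y →
      ¬(G \ SimpleGraph.fromEdgeSet {s(u, v)}).Reachable u v := by
    intro v hvu hvx hvy
    by_cases hvp : v = p
    · have hcl : ∀ ⦃a b : V⦄, (G \ SimpleGraph.fromEdgeSet {s(u, v)}).Adj a b →
          a ∈ ({p, x} : Set V) → b ∈ ({p, x} : Set V) := by
        intro a b hab haS
        obtain ⟨hm, hne, hnee⟩ := hdel _ _ _ hab
        simp only [Set.mem_insert_iff, Set.mem_singleton_iff] at haS ⊢
        rw [ne_eq, Sym2.eq_iff] at hnee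
        clear hab hdel hG
        rcases hm with ⟨v', h1, h2, h3, hs⟩ | hs | hs <;>
            simp only [Sym2.eq_iff] at hs <;>
          rcases hs with ⟨rfl, rfl⟩ | ⟨rfl, rfl⟩ <;> simp_all
      intro hr
      have := reach_invariant hcl hr.symm (by rw [hvp]; exact Set.mem_insert _ _)
      rcases this with h | h
      · exact hpu h.symm
      · exact hxu h.symm
    by_cases hvq : v = q
    · have hcl : ∀ ⦃a b : V⦄, (G \ SimpleGraph.fromEdgeSet {s(u, v)}).Adj a b →
          a ∈ ({q, y} : Set V) → b ∈ ({q, y} : Set V) := by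
        intro a b hab haS
        obtain ⟨hm, hne, hnee⟩ := hdel _ _ _ hab
        simp only [Set.mem_insert_iff, Set.mem_singleton_iff] at haS ⊢
        rw [ne_eq, Sym2.eq_iff] at hnee
        clear hab hdel hG
        rcases hm with ⟨v', h1, h2, h3, hs⟩ | hs | hs <;>
            simp only [Sym2.eq_iff] at hs <;>
          rcases hs with ⟨rfl, rfl⟩ | ⟨rfl, rfl⟩ <;> simp_all
      intro hr
      have := reach_invariant hcl hr.symm (by rw [hvq]; exact Set.mem_insert _ _)
      rcases this with h | h
      · exact hqu h.symm
      · exact hyu h.symm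
    · have hcl : ∀ ⦃a b : V⦄, (G \ SimpleGraph.fromEdgeSet {s(u, v)}).Adj a b →
          a ∈ ({v} : Set V) → b ∈ ({v} : Set V) := by
        intro a b hab haS
        obtain ⟨hm, hne, hnee⟩ := hdel _ _ _ hab
        simp only [Set.mem_singleton_iff] at haS ⊢
        rw [ne_eq, Sym2.eq_iff] at hnee
        clear hab hdel hG
        rcases hm with ⟨v', h1, h2, h3, hs⟩ | hs | hs <;>
            simp only [Sym2.eq_iff] at hs <;>
          rcases hs with ⟨rfl, rfl⟩ | ⟨rfl, rfl⟩ <;> simp_all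
      intro hr
      have := reach_invariant hcl hr.symm (Set.mem_singleton _)
      exact hvu this.symm
  have key2 : ¬(G \ SimpleGraph.fromEdgeSet {s(x, p)}).Reachable x p := by
    have hcl : ∀ ⦃a b : V⦄, (G \ SimpleGraph.fromEdgeSet {s(x, p)}).Adj a b →
        a ∈ ({x} : Set V) → b ∈ ({x} : Set V) := by
      intro a b hab haS
      obtain ⟨hm, hne, hnee⟩ := hdel _ _ _ hab
      simp only [Set.mem_singleton_iff] at haS ⊢
      rw [ne_eq, Sym2.eq_iff] at hnee
      clear hab hdel hG
      rcases hm with ⟨v', h1, h2, h3, hs⟩ | hs | hs <;>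
          simp only [Sym2.eq_iff] at hs <;>
        rcases hs with ⟨rfl, rfl⟩ | ⟨rfl, rfl⟩ <;> simp_all
    intro hr
    exact hpx (reach_invariant hcl hr (Set.mem_singleton _))
  have key3 : ¬(G \ SimpleGraph.fromEdgeSet {s(y, q)}).Reachable y q := by
    have hcl : ∀ ⦃a b : V⦄, (G \ SimpleGraph.fromEdgeSet {s(y, q)}).Adj a b →
        a ∈ ({y} : Set V) → b ∈ ({y} : Set V) := by
      intro a b hab haS
      obtain ⟨hm, hne, hnee⟩ := hdel _ _ _ hab
      simp only [Set.mem_singleton_iff] at haS ⊢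
      rw [ne_eq, Sym2.eq_iff] at hnee
      clear hab hdel hG
      rcases hm with ⟨v', h1, h2, h3, hs⟩ | hs | hs <;>
          simp only [Sym2.eq_iff] at hs <;>
        rcases hs with ⟨rfl, rfl⟩ | ⟨rfl, rfl⟩ <;> simp_all
    intro hr
    exact hqy (reach_invariant hcl hr (Set.mem_singleton _))
  rw [SimpleGraph.isAcyclic_iff_forall_adj_isBridge]
  intro w z hadj
  have hmem := hadj
  rw [hG, modifiedStar_adj] at hmem
  rw [SimpleGraph.isBridge_iff]
  obtain ⟨hm, hwz⟩ := hmem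
  rcases hm with ⟨v, h1, h2, h3, hs⟩ | hs | hs <;> rw [hs] <;>
    rcases Sym2.eq_iff.mp hs with ⟨rfl, rfl⟩ | ⟨rfl, rfl⟩
  · exact key1 z h1 h2 h3
  · exact fun hr => key1 w h1 h2 h3 hr.symm
  · exact key2
  · exact fun hr => key2 hr.symm
  · exact key3
  · exact fun hr => key3 hr.symm

lemma modifiedStar_isTree {V : Type*} (u x y p q : V)
    (hxu : x ≠ u) (hyu : y ≠ u) (hxy : x ≠ y)
    (hpu : p ≠ u) (hpx : p ≠ x) (hpy : p ≠ y)
    (hqu : q ≠ u) (hqx : q ≠ x) (hqy : q ≠ y) (hpq : p ≠ q) :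
    (modifiedStar u x y s(x, p) s(y, q)).IsTree :=
  ⟨modifiedStar_connected u x y p q hxu hyu hxy hpu hpx hpy hqu hqx hqy,
   modifiedStar_isAcyclic u x y p q hxu hyu hxy hpu hpx hpy hqu hqx hqy hpq⟩

lemma mem_modifiedStar_edgeSet {V : Type*} {u x y : V} {e₁ e₂ : Sym2 V} {e : Sym2 V}
    (h : e ∈ (modifiedStar u x y e₁ e₂).edgeSet) :
    (∃ v, v ≠ u ∧ v ≠ x ∧ v ≠ y ∧ e = s(u, v)) ∨ e = e₁ ∨ e = e₂ := by
  rw [modifiedStar, SimpleGraph.edgeSet_fromEdgeSet] at h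
  have h2 := h.1
  simp only [Set.mem_union, Set.mem_setOf_eq, Set.mem_insert_iff, Set.mem_singleton_iff] at h2
  tauto

lemma modifiedStar_injOn {V C : Type*} (φ : Sym2 V → C) (hproper : IsProperEdgeColoring φ)
    (u x y p q : V) (hxu : x ≠ u) (hyu : y ≠ u)
    (A B : C) (hAB : A ≠ B)
    (hxpA : φ s(x, p) = A) (hyqB : φ s(y, q) = B)
    (huyA : φ s(u, y) = A) (huxB : φ s(u, x) = B) :
    Set.InjOn φ (modifiedStar u x y s(x, p) s(y, q)).edgeSet := by
  intro e he f hf hef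
  rcases mem_modifiedStar_edgeSet he with ⟨v₁, h1u, h1x, h1y, rfl⟩ | rfl | rfl <;>
    rcases mem_modifiedStar_edgeSet hf with ⟨v₂, h2u, h2x, h2y, rfl⟩ | rfl | rfl
  · have : v₁ = v₂ := by
      by_contra hne
      exact hproper u v₁ v₂ h1u.symm h2u.symm hne hef
    rw [this]
  · exact absurd (hef.trans (hxpA.trans huyA.symm)) (hproper u v₁ y h1u.symm hyu.symm h1y)
  · exact absurd (hef.trans (hyqB.trans huxB.symm)) (hproper u v₁ x h1u.symm hxu.symm h1x)
  · exact absurd ((hef.symm.trans hxpA).trans huyA.symm) (hproper u v₂ y h2u.symm hyu.symm h2y)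
  · rfl
  · exact absurd (hxpA.symm.trans (hef.trans hyqB)) hAB
  · exact absurd ((hef.symm.trans hyqB).trans huxB.symm) (hproper u v₂ x h2u.symm hxu.symm h2x)
  · exact absurd (hyqB.symm.trans (hef.trans hxpA)) hAB.symm
  · rfl

def swap6 {V : Type*} [DecidableEq V] (x₁ x₂ x₃ x₄ w₃ w₄ v : V) : V :=
  if v = x₁ then x₂ else if v = x₂ then x₁ else if v = x₃ then x₄ else if v = x₄ then x₃
  else if v = w₃ then w₄ else if v = w₄ then w₃ else v

section Swap6
variable {V : Type*} [DecidableEq V] (x₁ x₂ x₃ x₄ w₃ w₄ : V)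

lemma swap6_e1 : swap6 x₁ x₂ x₃ x₄ w₃ w₄ x₁ = x₂ := by simp [swap6]

lemma swap6_e2 (h12 : x₁ ≠ x₂) : swap6 x₁ x₂ x₃ x₄ w₃ w₄ x₂ = x₁ := by
  simp [swap6, h12.symm]

lemma swap6_e3 (h13 : x₁ ≠ x₃) (h23 : x₂ ≠ x₃) : swap6 x₁ x₂ x₃ x₄ w₃ w₄ x₃ = x₄ := by
  simp [swap6, h13.symm, h23.symm]

lemma swap6_e4 (h14 : x₁ ≠ x₄) (h24 : x₂ ≠ x₄) (h34 : x₃ ≠ x₄) :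
    swap6 x₁ x₂ x₃ x₄ w₃ w₄ x₄ = x₃ := by
  simp [swap6, h14.symm, h24.symm, h34.symm]

lemma swap6_e5 (h1w3 : x₁ ≠ w₃) (h2w3 : x₂ ≠ w₃) (h3w3 : x₃ ≠ w₃) (h4w3 : x₄ ≠ w₃) :
    swap6 x₁ x₂ x₃ x₄ w₃ w₄ w₃ = w₄ := by
  simp [swap6, h1w3.symm, h2w3.symm, h3w3.symm, h4w3.symm]

lemma swap6_e6 (h1w4 : x₁ ≠ w₄) (h2w4 : x₂ ≠ w₄) (h3w4 : x₃ ≠ w₄) (h4w4 : x₄ ≠ w₄)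
    (hw : w₃ ≠ w₄) : swap6 x₁ x₂ x₃ x₄ w₃ w₄ w₄ = w₃ := by
  simp [swap6, h1w4.symm, h2w4.symm, h3w4.symm, h4w4.symm, hw.symm]

lemma swap6_e0 (v : V) (n1 : v ≠ x₁) (n2 : v ≠ x₂) (n3 : v ≠ x₃) (n4 : v ≠ x₄)
    (n5 : v ≠ w₃) (n6 : v ≠ w₄) : swap6 x₁ x₂ x₃ x₄ w₃ w₄ v = v := by
  simp [swap6, n1, n2, n3, n4, n5, n6]

end Swap6

lemma swap6_involutive {V : Type*} [DecidableEq V] (x₁ x₂ x₃ x₄ w₃ w₄ : V)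
    (h12 : x₁ ≠ x₂) (h13 : x₁ ≠ x₃) (h14 : x₁ ≠ x₄) (h1w3 : x₁ ≠ w₃) (h1w4 : x₁ ≠ w₄)
    (h23 : x₂ ≠ x₃) (h24 : x₂ ≠ x₄) (h2w3 : x₂ ≠ w₃) (h2w4 : x₂ ≠ w₄)
    (h34 : x₃ ≠ x₄) (h3w3 : x₃ ≠ w₃) (h3w4 : x₃ ≠ w₄)
    (h4w3 : x₄ ≠ w₃) (h4w4 : x₄ ≠ w₄) (hw : w₃ ≠ w₄) :
    Function.Involutive (swap6 x₁ x₂ x₃ x₄ w₃ w₄) := by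
  have e1 := swap6_e1 x₁ x₂ x₃ x₄ w₃ w₄
  have e2 := swap6_e2 x₁ x₂ x₃ x₄ w₃ w₄ h12
  have e3 := swap6_e3 x₁ x₂ x₃ x₄ w₃ w₄ h13 h23
  have e4 := swap6_e4 x₁ x₂ x₃ x₄ w₃ w₄ h14 h24 h34
  have e5 := swap6_e5 x₁ x₂ x₃ x₄ w₃ w₄ h1w3 h2w3 h3w3 h4w3
  have e6 := swap6_e6 x₁ x₂ x₃ x₄ w₃ w₄ h1w4 h2w4 h3w4 h4w4 hw
  have e0 := swap6_e0 x₁ x₂ x₃ x₄ w₃ w₄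
  intro v
  by_cases c1 : v = x₁
  · rw [c1, e1, e2]
  by_cases c2 : v = x₂
  · rw [c2, e2, e1]
  by_cases c3 : v = x₃
  · rw [c3, e3, e4]
  by_cases c4 : v = x₄
  · rw [c4, e4, e3]
  by_cases c5 : v = w₃
  · rw [c5, e5, e6]
  by_cases c6 : v = w₄
  · rw [c6, e6, e5]
  · rw [e0 v c1 c2 c3 c4 c5 c6, e0 v c1 c2 c3 c4 c5 c6]

lemma modifiedStar_map {V : Type*} (σ : Equiv.Perm V) (u x y p q : V) {a b : V}
    (h : (modifiedStar u x y s(x, p) s(y, q)).Adj a b) :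
    (modifiedStar (σ u) (σ x) (σ y) s(σ x, σ p) s(σ y, σ q)).Adj (σ a) (σ b) := by
  rw [modifiedStar_adj] at h ⊢
  obtain ⟨hm, hab⟩ := h
  refine ⟨?_, σ.injective.ne hab⟩
  rcases hm with ⟨v, h1, h2, h3, hs⟩ | hs | hs
  · exact Or.inl ⟨σ v, σ.injective.ne h1, σ.injective.ne h2, σ.injective.ne h3, by
      rw [← Sym2.map_pair_eq, ← Sym2.map_pair_eq, hs]⟩
  · exact Or.inr (Or.inl (by rw [← Sym2.map_pair_eq, ← Sym2.map_pair_eq, hs]))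
  · exact Or.inr (Or.inr (by rw [← Sym2.map_pair_eq, ← Sym2.map_pair_eq, hs]))

/-- **Case 1 of Lemma 5.** Given a proper `(2m-1)`-edge-coloring `φ` of `K_{2m}`
(`m ≥ 3`) and a 4-cycle `(x₁, x₂, x₃, x₄)` with `φ(x₁x₄) = φ(x₂x₃) = a`,
`φ(x₁x₂) = b`, `φ(x₃x₄) = c` and `b ≠ c`, the trees `T₁ = S_{x₁}[x₂, x₄; b, a]`
(all edges at `x₁` except `x₁x₂`, `x₁x₄`, plus `x₂x₃` and the edge of color `b`
at `x₄`) and `T₂ = S_{x₂}[x₁, x₃; b, a]` (all edges at `x₂` except `x₂x₁`, `x₂x₃`,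
plus `x₁x₄` and the edge of color `b` at `x₃`) are edge-disjoint multicolored
spanning trees of `K_{2m}`, isomorphic as graphs. -/
theorem two_modifiedStars_disjoint_isomorphic (m : ℕ) (hm : 3 ≤ m)
    (φ : Sym2 (Fin (2 * m)) → Fin (2 * m - 1))
    (hproper : IsProperEdgeColoring φ)
    (x₁ x₂ x₃ x₄ : Fin (2 * m))
    (hne : x₁ ≠ x₂ ∧ x₁ ≠ x₃ ∧ x₁ ≠ x₄ ∧ x₂ ≠ x₃ ∧ x₂ ≠ x₄ ∧ x₃ ≠ x₄)
    (a b c : Fin (2 * m - 1)) (hbc : b ≠ c)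
    (ha14 : φ s(x₁, x₄) = a) (ha23 : φ s(x₂, x₃) = a)
    (hb : φ s(x₁, x₂) = b) (hc : φ s(x₃, x₄) = c)
    (w₄ : Fin (2 * m)) (hw₄ : w₄ ≠ x₄) (hw₄b : φ s(x₄, w₄) = b)
    (w₃ : Fin (2 * m)) (hw₃ : w₃ ≠ x₃) (hw₃b : φ s(x₃, w₃) = b) :
    (modifiedStar x₁ x₂ x₄ s(x₂, x₃) s(x₄, w₄)).IsTree ∧
    (modifiedStar x₂ x₁ x₃ s(x₁, x₄) s(x₃, w₃)).IsTree ∧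
    Set.InjOn φ (modifiedStar x₁ x₂ x₄ s(x₂, x₃) s(x₄, w₄)).edgeSet ∧
    Set.InjOn φ (modifiedStar x₂ x₁ x₃ s(x₁, x₄) s(x₃, w₃)).edgeSet ∧
    Disjoint (modifiedStar x₁ x₂ x₄ s(x₂, x₃) s(x₄, w₄)).edgeSet
      (modifiedStar x₂ x₁ x₃ s(x₁, x₄) s(x₃, w₃)).edgeSet ∧
    Nonempty ((modifiedStar x₁ x₂ x₄ s(x₂, x₃) s(x₄, w₄)) ≃g
      (modifiedStar x₂ x₁ x₃ s(x₁, x₄) s(x₃, w₃))) := by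
  obtain ⟨h12, h13, h14, h23, h24, h34⟩ := hne
  -- basic color facts
  have hab : a ≠ b := by
    have h := hproper x₁ x₄ x₂ h14 h12 (fun h => h24 h.symm)
    rw [ha14, hb] at h
    exact h
  have hb2 : φ s(x₂, x₁) = b := by rw [Sym2.eq_swap]; exact hb
  -- w₄ is none of x₁, x₂, x₃
  have hw41 : w₄ ≠ x₁ := by
    intro hEq
    rw [hEq, Sym2.eq_swap] at hw₄b
    exact hab (ha14.symm.trans hw₄b)
  have hw42 : w₄ ≠ x₂ := by
    intro hEq
    rw [hEq, Sym2.eq_swap] at hw₄b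
    exact hproper x₂ x₄ x₁ h24 h12.symm h14.symm (hw₄b.trans hb2.symm)
  have hw43 : w₄ ≠ x₃ := by
    intro hEq
    rw [hEq, Sym2.eq_swap] at hw₄b
    exact hbc (hw₄b.symm.trans hc)
  -- w₃ is none of x₁, x₂, x₄
  have hw31 : w₃ ≠ x₁ := by
    intro hEq
    rw [hEq, Sym2.eq_swap] at hw₃b
    exact hproper x₁ x₃ x₂ h13 h12 (fun h => h23 h.symm) (hw₃b.trans hb.symm)
  have hw32 : w₃ ≠ x₂ := by
    intro hEq
    rw [hEq, Sym2.eq_swap] at hw₃b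
    exact hab (ha23.symm.trans hw₃b)
  have hw34 : w₃ ≠ x₄ := by
    intro hEq
    rw [hEq] at hw₃b
    exact hbc (hw₃b.symm.trans hc)
  have hww : w₃ ≠ w₄ := by
    intro hEq
    rw [← hEq] at hw₄b
    have h3 : φ s(w₃, x₃) = b := by rw [Sym2.eq_swap]; exact hw₃b
    have h4 : φ s(w₃, x₄) = b := by rw [Sym2.eq_swap]; exact hw₄b
    exact hproper w₃ x₃ x₄ hw₃ hw34 h34 (h3.trans h4.symm)
  refine ⟨?_, ?_, ?_, ?_, ?_, ?_⟩
  · exact modifiedStar_isTree x₁ x₂ x₄ x₃ w₄ h12.symm h14.symm h24 h13.symm h23.symm h34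
      hw41 hw42 hw₄ hw43.symm
  · exact modifiedStar_isTree x₂ x₁ x₃ x₄ w₃ h12 h23.symm h13 h24.symm h14.symm h34.symm
      hw32 hw31 hw₃ hw34.symm
  · exact modifiedStar_injOn φ hproper x₁ x₂ x₄ x₃ w₄ h12.symm h14.symm a b hab
      ha23 hw₄b ha14 hb
  · exact modifiedStar_injOn φ hproper x₂ x₁ x₃ x₄ w₃ h12 h23.symm a b hab
      ha14 hw₃b ha23 hb2
  · rw [Set.disjoint_left]
    intro e he hf
    rcases mem_modifiedStar_edgeSet he with ⟨v₁, k1, k2, k3, rfl⟩ | rfl | rfl <;>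
      rcases mem_modifiedStar_edgeSet hf with ⟨v₂, g1, g2, g3, h'⟩ | h' | h' <;>
        clear he hf <;> rw [Sym2.eq_iff] at h' <;>
      rcases h' with ⟨e1, e2⟩ | ⟨e1, e2⟩ <;> simp_all
  · -- the isomorphism
    have hinv := swap6_involutive x₁ x₂ x₃ x₄ w₃ w₄ h12 h13 h14 hw31.symm hw41.symm
      h23 h24 hw32.symm hw42.symm h34 hw₃.symm hw43.symm hw34.symm hw₄.symm hww
    set σ : Equiv.Perm (Fin (2 * m)) := hinv.toPerm with hσdef
    have hinv' : ∀ v, σ (σ v) = v := fun v => hinv v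
    have hs1 : σ x₁ = x₂ := swap6_e1 x₁ x₂ x₃ x₄ w₃ w₄
    have hs2 : σ x₂ = x₁ := swap6_e2 x₁ x₂ x₃ x₄ w₃ w₄ h12
    have hs3 : σ x₃ = x₄ := swap6_e3 x₁ x₂ x₃ x₄ w₃ w₄ h13 h23
    have hs4 : σ x₄ = x₃ := swap6_e4 x₁ x₂ x₃ x₄ w₃ w₄ h14 h24 h34
    have hs5 : σ w₃ = w₄ := swap6_e5 x₁ x₂ x₃ x₄ w₃ w₄ hw31.symm hw32.symm hw₃.symm hw34.symm
    have hs6 : σ w₄ = w₃ := swap6_e6 x₁ x₂ x₃ x₄ w₃ w₄ hw41.symm hw42.symm hw43.symm hw₄.symm hww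
    have F1 : ∀ a b : Fin (2 * m), (modifiedStar x₁ x₂ x₄ s(x₂, x₃) s(x₄, w₄)).Adj a b →
        (modifiedStar x₂ x₁ x₃ s(x₁, x₄) s(x₃, w₃)).Adj (σ a) (σ b) := by
      intro a b h
      have := modifiedStar_map σ x₁ x₂ x₄ x₃ w₄ h
      rwa [hs1, hs2, hs4, hs3, hs6] at this
    have F2 : ∀ a b : Fin (2 * m), (modifiedStar x₂ x₁ x₃ s(x₁, x₄) s(x₃, w₃)).Adj a b →
        (modifiedStar x₁ x₂ x₄ s(x₂, x₃) s(x₄, w₄)).Adj (σ a) (σ b) := by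
      intro a b h
      have := modifiedStar_map σ x₂ x₁ x₃ x₄ w₃ h
      rwa [hs2, hs1, hs3, hs4, hs5] at this
    refine ⟨⟨σ, ?_⟩⟩
    intro a b
    constructor
    · intro h
      have := F2 _ _ h
      rwa [hinv', hinv'] at this
    · exact F1 a b
end
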